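/- arXiv:1410.5554 — 7 statements merged into one kernel-verified Lean document; each statement's English description precedes it below -/
import Mathlib

section
/- If U_e ∈ S_loc(1) (the discrete equilibrium distribution of U is locally subexponential with span one), then U ∈ S* (i.e., lim_{k→∞} Σ_{l=0}^{k} P(U>k−l)P(U>l)/P(U>k) = 2E[U] < ∞), and conversely if U ∈ S*, then U_e ∈ S_loc(1). -/
open Filter Topology

/-- `P(U > k)` for a ℤ₊-valued random variable with pmf `p`. -/
noncomputable def tail (p : ℕ → ℝ) (k : ℕ) : ℝ := ∑' l : ℕ, p (k + 1 + l)

/-- Discrete convolution of two pmfs on ℤ₊. -/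
noncomputable def conv (f g : ℕ → ℝ) (k : ℕ) : ℝ :=
  ∑ l ∈ Finset.range (k + 1), f (k - l) * g l

/-- Mean of a ℤ₊-valued random variable with pmf `p`. -/
noncomputable def pmean (p : ℕ → ℝ) : ℝ := ∑' k : ℕ, (k : ℝ) * p k

/-- `V ∈ S_loc(1)`: locally subexponential with span one. -/
def SLocOne (q : ℕ → ℝ) : Prop :=
  (∀ᶠ k in atTop, 0 < q k) ∧
    Tendsto (fun k => q (k + 1) / q k) atTop (nhds 1) ∧
    Tendsto (fun k => conv q q k / q k) atTop (nhds 2)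

/-- `U ∈ S*`. -/
noncomputable def SStar (p : ℕ → ℝ) : Prop :=
  Tendsto (fun k => (∑ l ∈ Finset.range (k + 1), tail p (k - l) * tail p l) / tail p k)
    atTop (nhds (2 * pmean p))

private lemma tail_succ' (p : ℕ → ℝ) (hp : Summable p) (k : ℕ) :
    tail p k = p (k + 1) + tail p (k + 1) := by
  have hs : Summable (fun l : ℕ => p (k + 1 + l)) :=
    hp.comp_injective (add_right_injective (k+1))
  rw [tail, tail, Summable.tsum_eq_zero_add hs, Nat.add_zero]
  congr 1
  exact tsum_congr fun l => congrArg p (by omega)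

private lemma tail_nonneg' (p : ℕ → ℝ) (hnn : ∀ k, 0 ≤ p k) (k : ℕ) : 0 ≤ tail p k :=
  tsum_nonneg fun _ => hnn _

private lemma tail_anti (p : ℕ → ℝ) (hnn : ∀ k, 0 ≤ p k) (hp : Summable p) :
    Antitone (tail p) :=
  antitone_nat_of_succ_le fun n => by
    rw [tail_succ' p hp n]; linarith [hnn (n+1)]

private lemma sum_tail_eq (p : ℕ → ℝ) (hp : Summable p) : ∀ t : ℕ,
    ∑ l ∈ Finset.range (t+1), tail p l
      = ∑ n ∈ Finset.range (t+2), (n:ℝ) * p n + (t+1 : ℝ) * tail p (t+1)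
  | 0 => by
    simp [Finset.sum_range_succ, tail_succ' p hp 0]
  | (t+1) => by
    rw [Finset.sum_range_succ, sum_tail_eq p hp t,
        show t+1+1 = t+2 by omega, Finset.sum_range_succ (n := t+2),
        tail_succ' p hp (t+1), show t+1+1 = t+2 by omega]
    push_cast
    ring

private lemma conv_lower (p : ℕ → ℝ) (hnn : ∀ k, 0 ≤ p k)
    (t k : ℕ) (hk : 2*t+1 ≤ k) :
    2 * ∑ l ∈ Finset.range (t+1), tail p (k-l) * tail p l
      ≤ ∑ l ∈ Finset.range (k+1), tail p (k-l) * tail p l := by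
  classical
  set f : ℕ → ℝ := fun l => tail p (k-l) * tail p l with hf
  have hnnf : ∀ l, 0 ≤ f l := fun l => mul_nonneg (tail_nonneg' p hnn _) (tail_nonneg' p hnn _)
  set s1 := Finset.range (t+1) with hs1
  set s2 := s1.image (fun l => k - l) with hs2
  have hdisj : Disjoint s1 s2 := by
    rw [Finset.disjoint_left]
    intro a ha hb
    simp only [hs1, hs2, Finset.mem_image, Finset.mem_range] at ha hb
    obtain ⟨b, hb1, hb2⟩ := hb
    omega
  have hsub : s1 ∪ s2 ⊆ Finset.range (k+1) := by
    intro a ha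
    simp only [hs1, hs2, Finset.mem_union, Finset.mem_image, Finset.mem_range] at ha ⊢
    rcases ha with h | ⟨b, hb1, hb2⟩ <;> omega
  have h2 : ∑ l ∈ s2, f l = ∑ l ∈ s1, f l := by
    rw [hs2, Finset.sum_image (by
      intro a ha b hb hab
      simp only [hs1, Finset.mem_coe, Finset.coe_range, Set.mem_Iio, Finset.mem_range] at ha hb hab
      omega)]
    apply Finset.sum_congr rfl
    intro l hl
    simp only [hs1, Finset.mem_range] at hl
    have h1 : k - (k - l) = l := by omega
    simp only [hf, h1, mul_comm]
  calc 2 * ∑ l ∈ s1, f l = ∑ l ∈ s1, f l + ∑ l ∈ s2, f l := by rw [h2]; ring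
    _ = ∑ l ∈ s1 ∪ s2, f l := (Finset.sum_union hdisj).symm
    _ ≤ ∑ l ∈ Finset.range (k+1), f l :=
        Finset.sum_le_sum_of_subset_of_nonneg hsub (fun i _ _ => hnnf i)

private lemma head_lower (p : ℕ → ℝ) (hnn : ∀ k, 0 ≤ p k) (hanti : Antitone (tail p))
    (t k : ℕ) :
    tail p k * tail p 0 + tail p (k-1) * (∑ l ∈ Finset.range (t+1), tail p l - tail p 0)
      ≤ ∑ l ∈ Finset.range (t+1), tail p (k-l) * tail p l := by
  rw [Finset.sum_range_succ' (fun l => tail p (k-l) * tail p l) t,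
      Finset.sum_range_succ' (fun l => tail p l) t]
  simp only [Nat.sub_zero, add_sub_cancel_right]
  have hle : tail p (k-1) * ∑ i ∈ Finset.range t, tail p (i+1)
      ≤ ∑ i ∈ Finset.range t, tail p (k-(i+1)) * tail p (i+1) := by
    rw [Finset.mul_sum]
    apply Finset.sum_le_sum
    intro i _
    exact mul_le_mul_of_nonneg_right (hanti (show k-(i+1) ≤ k-1 by omega))
      (tail_nonneg' p hnn _)
  linarith

private lemma ratio_lemma (p : ℕ → ℝ) (hnn : ∀ k, 0 ≤ p k) (hsum : HasSum p 1)
    (htail : ∀ k, 0 < tail p k) (hmean : Summable fun k : ℕ => (k : ℝ) * p k)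
    (hS : SStar p) :
    Tendsto (fun k => tail p (k + 1) / tail p k) atTop (𝓝 1) := by
  have hp : Summable p := hsum.summable
  have hanti : Antitone (tail p) := tail_anti p hnn hp
  suffices hg : Tendsto (fun k => tail p k / tail p (k+1)) atTop (𝓝 1) by
    have heq : (fun k => tail p (k+1) / tail p k)
        = fun k => (tail p k / tail p (k+1))⁻¹ := by
      funext k; rw [inv_div]
    rw [heq]
    simpa using hg.inv₀ one_ne_zero
  rw [Metric.tendsto_atTop]
  intro ε hε
  set m := pmean p with hm
  set T := tail p with hT
  have hT1 : 0 < T 1 := htail 1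
  have hW : Tendsto (fun N => ∑ n ∈ Finset.range N, (n:ℝ) * p n) atTop (𝓝 m) := by
    have := hmean.hasSum.tendsto_sum_nat
    exact this
  have hlt : m - ε * T 1 / 8 < m := by nlinarith
  obtain ⟨N1, hN1⟩ := (Filter.eventually_atTop).1 (hW.eventually (eventually_gt_nhds hlt))
  set t := max N1 1 with ht
  have hWt : m - ε * T 1 / 8 < ∑ l ∈ Finset.range (t+1), T l := by
    have h1 := hN1 (t+2) (by omega)
    have h2 : ∑ n ∈ Finset.range (t+2), (n:ℝ) * p n ≤ ∑ l ∈ Finset.range (t+1), T l := by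
      rw [sum_tail_eq p hp t]
      have : (0:ℝ) ≤ (t+1 : ℝ) * tail p (t+1) :=
        mul_nonneg (by positivity) (tail_nonneg' p hnn _)
      linarith
    linarith
  set A := (∑ l ∈ Finset.range (t+1), T l) - T 0 with hA
  have hA1 : T 1 ≤ A := by
    have hsub : ({0, 1} : Finset ℕ) ⊆ Finset.range (t+1) := by
      intro a ha; simp at ha; rcases ha with h | h <;> simp [h] <;> omega
    have := Finset.sum_le_sum_of_subset_of_nonneg hsub
      (fun i _ _ => tail_nonneg' p hnn i)
    rw [Finset.sum_pair (by omega : (0:ℕ) ≠ 1)] at this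
    simp only [hA]
    linarith
  have hApos : 0 < A := lt_of_lt_of_le hT1 hA1
  have hev : ∀ᶠ k in atTop,
      (∑ l ∈ Finset.range (k + 1), T (k - l) * T l) / T k < 2*m + ε * T 1 / 4 := by
    apply hS.eventually (eventually_lt_nhds _)
    nlinarith
  obtain ⟨N2, hN2⟩ := (Filter.eventually_atTop).1 hev
  refine ⟨max N2 (2*t+2), fun k hk => ?_⟩
  set j := k + 1 with hj
  have hj2t : 2*t+1 ≤ j := by omega
  have hjN2 : N2 ≤ j := by omega
  have hTjpos : 0 < T j := htail j
  have hTkpos : 0 < T k := htail k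
  have h1 : (∑ l ∈ Finset.range (j + 1), T (j - l) * T l) < (2*m + ε * T 1 / 4) * T j := by
    have := hN2 j hjN2
    rw [div_lt_iff₀ hTjpos] at this
    exact this
  have h2 := conv_lower p hnn t j hj2t
  have h3 := head_lower p hnn hanti t j
  have hj1 : j - 1 = k := by omega
  rw [hj1] at h3
  have h4 : 2 * (T j * T 0 + T k * A) < (2*m + ε * T 1 / 4) * T j := by
    have := mul_le_mul_of_nonneg_left h3 (by norm_num : (0:ℝ) ≤ 2)
    simp only [← hT, ← hA] at this h2 ⊢
    linarith
  have h5 : 2*m + ε * T 1 / 4 - 2 * T 0 < 2*A + ε * A / 2 := by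
    have : m - T 0 < A + ε * T 1 / 8 := by simp only [hA]; linarith
    nlinarith
  have h6 : T k * (2*A) < (1 + ε/4) * T j * (2*A) := by nlinarith
  have h7 : T k < (1 + ε/4) * T j := lt_of_mul_lt_mul_right h6 (by linarith)
  have h8 : T k / T j < 1 + ε/4 := by
    rw [div_lt_iff₀ hTjpos]; linarith [h7]
  have h9 : 1 ≤ T k / T j := (one_le_div hTjpos).2 (hanti (by omega : k ≤ j))
  rw [Real.dist_eq, abs_of_nonneg (by linarith)]
  linarith

private lemma conv_scale (p : ℕ → ℝ) (htail : ∀ k, 0 < tail p k) (hm : 0 < pmean p)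
    (k : ℕ) :
    conv (fun j => tail p j / pmean p) (fun j => tail p j / pmean p) k
        / (tail p k / pmean p)
      = (∑ l ∈ Finset.range (k+1), tail p (k-l) * tail p l) / tail p k / pmean p := by
  have hmne : pmean p ≠ 0 := hm.ne'
  have h1 : conv (fun j => tail p j / pmean p) (fun j => tail p j / pmean p) k
      = (∑ l ∈ Finset.range (k+1), tail p (k-l) * tail p l) / (pmean p * pmean p) := by
    rw [conv, Finset.sum_div]
    exact Finset.sum_congr rfl fun l _ => by rw [div_mul_div_comm]
  have h2 : (pmean p * pmean p) * (tail p k / pmean p) = tail p k * pmean p := by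
    field_simp
  rw [h1, div_div, div_div, h2]

/-- The equilibrium distribution `U_e` of `U` is locally subexponential with span one
iff `U ∈ S*`. -/
theorem stmt0 (p : ℕ → ℝ) (hnn : ∀ k, 0 ≤ p k) (hsum : HasSum p 1)
    (htail : ∀ k, 0 < tail p k) (hmean : Summable fun k : ℕ => (k : ℝ) * p k)
    (hmeanpos : 0 < pmean p) :
    SLocOne (fun k => tail p k / pmean p) ↔ SStar p := by
  have hmne : pmean p ≠ 0 := hmeanpos.ne'
  have heqc : (fun k => conv (fun j => tail p j / pmean p) (fun j => tail p j / pmean p) k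
        / (tail p k / pmean p))
      = fun k => (∑ l ∈ Finset.range (k+1), tail p (k-l) * tail p l) / tail p k / pmean p :=
    funext (conv_scale p htail hmeanpos)
  constructor
  · rintro ⟨-, -, h3⟩
    rw [heqc] at h3
    have h4 := h3.mul_const (pmean p)
    have h5 : (fun k => (∑ l ∈ Finset.range (k+1), tail p (k-l) * tail p l)
        / tail p k / pmean p * pmean p)
        = fun k => (∑ l ∈ Finset.range (k+1), tail p (k-l) * tail p l) / tail p k := by
      funext k; rw [div_mul_cancel₀ _ hmne]
    rw [h5] at h4
    exact h4
  · intro hS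
    refine ⟨Filter.Eventually.of_forall fun k => div_pos (htail k) hmeanpos, ?_, ?_⟩
    · have key := ratio_lemma p hnn hsum htail hmean hS
      have heq : (fun k : ℕ => tail p (k+1) / pmean p / (tail p k / pmean p))
          = fun k => tail p (k+1) / tail p k := by
        funext k
        have hk0 : tail p k ≠ 0 := (htail k).ne'
        field_simp
      simpa [heq] using key
    · rw [heqc]
      have h4 := hS.div_const (pmean p)
      have : 2 * pmean p / pmean p = 2 := by
        rw [mul_div_assoc, div_self hmne, mul_one]
      rwa [this] at h4
end

section
/- Let U be a ℤ₊-valued random variable with P(U=k) > 0 for all sufficiently large k. Suppose U is locally long-tailed with span one, i.e., lim_{k→∞} P(U=k+1)/P(U=k) = 1. Then for any positive integer h, any l₀ ∈ ℤ₊ and any ν ∈ {0,1,…,h−1}, lim_{k→∞} (Σ_{l=l₀}^{∞} P(U = k + l·h + ν)) / P(U > k) = 1/h. -/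
open Filter Topology

private lemma summable_shift {p : ℕ → ℝ} (hp : Summable p) (a : ℕ) :
    Summable fun l => p (a + l) :=
  hp.comp_injective (add_right_injective a)

private lemma summable_prog {p : ℕ → ℝ} (hp : Summable p) (k c h ν : ℕ) (hh : 0 < h) :
    Summable fun l : ℕ => p (k + (c + l) * h + ν) := by
  apply hp.comp_injective
  intro a b hab
  simp only at hab
  have h1 : (c + a) * h = (c + b) * h := by
    have h2 : k + (c + a) * h + ν = k + (c + b) * h + ν := hab
    generalize (c + a) * h = x at h2
    generalize (c + b) * h = y at h2
    omega
  have h2 : c + a = c + b := Nat.eq_of_mul_eq_mul_right hh h1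
  omega

private lemma ratio_shift (p : ℕ → ℝ) (hpos : ∀ᶠ k in atTop, 0 < p k)
    (hll : Tendsto (fun k => p (k + 1) / p k) atTop (nhds 1)) (a : ℕ) :
    Tendsto (fun k => p (k + a) / p k) atTop (nhds 1) := by
  induction a with
  | zero =>
    apply Tendsto.congr' _ tendsto_const_nhds
    filter_upwards [hpos] with k hk
    simp [div_self hk.ne']
  | succ a ih =>
    have h1 : Tendsto (fun k => p (k + a + 1) / p (k + a)) atTop (nhds 1) :=
      hll.comp (tendsto_add_atTop_nat a)
    have h2 := h1.mul ih
    rw [one_mul] at h2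
    apply Tendsto.congr' _ h2
    filter_upwards [(tendsto_add_atTop_nat a).eventually hpos] with k hk
    have he : k + (a + 1) = k + a + 1 := rfl
    rw [he]
    field_simp

private lemma ratio_two (p : ℕ → ℝ) (hpos : ∀ᶠ k in atTop, 0 < p k)
    (hll : Tendsto (fun k => p (k + 1) / p k) atTop (nhds 1)) (a b : ℕ) :
    Tendsto (fun k => p (k + a) / p (k + b)) atTop (nhds 1) := by
  have hA := ratio_shift p hpos hll a
  have hB := ratio_shift p hpos hll b
  have hq := hA.div hB one_ne_zero
  rw [div_one] at hq
  apply Tendsto.congr' _ hq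
  filter_upwards [hpos, (tendsto_add_atTop_nat b).eventually hpos] with k hk hkb
  show p (k + a) / p k / (p (k + b) / p k) = p (k + a) / p (k + b)
  field_simp

private lemma err_tendsto (p : ℕ → ℝ) (hnn : ∀ k, 0 ≤ p k) (hp : Summable p)
    (hpos : ∀ᶠ k in atTop, 0 < p k)
    (hll : Tendsto (fun k => p (k + 1) / p k) atTop (nhds 1)) (c : ℕ) :
    Tendsto (fun k => p (k + c) / tail p k) atTop (nhds 0) := by
  rw [Metric.tendsto_nhds]
  intro δ hδ
  set N : ℕ := ⌈1/δ⌉₊ + 1 with hNdef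
  have hNgt : 1/δ < (N : ℝ) := by
    calc 1/δ ≤ (⌈1/δ⌉₊ : ℝ) := Nat.le_ceil _
    _ < (N : ℝ) := by exact_mod_cast Nat.lt_succ_self _
  have hR : Tendsto (fun k => ∑ j ∈ Finset.range N, p (k + 1 + j) / p (k + c))
      atTop (nhds N) := by
    have := tendsto_finset_sum (Finset.range N)
      (fun j _ => (ratio_two p hpos hll (1 + j) c).congr
        (fun k => by rw [← add_assoc]))
    simpa using this
  have hRk : ∀ᶠ k in atTop, 1/δ < ∑ j ∈ Finset.range N, p (k + 1 + j) / p (k + c) :=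
    hR.eventually (lt_mem_nhds hNgt)
  rw [eventually_atTop] at *
  obtain ⟨K1, hK1⟩ := hpos
  obtain ⟨K2, hK2⟩ := hRk
  refine ⟨K1 + K2, fun k hk => ?_⟩
  have hpc : 0 < p (k + c) := hK1 _ (by omega)
  have hsum : 1/δ < (∑ j ∈ Finset.range N, p (k + 1 + j)) / p (k + c) := by
    rw [Finset.sum_div]
    exact hK2 _ (by omega)
  set D := ∑ j ∈ Finset.range N, p (k + 1 + j) with hD
  have hDpos : 0 < D := by
    have h1 : 0 < 1/δ := by positivity
    rw [lt_div_iff₀ hpc] at hsum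
    nlinarith
  have hDT : D ≤ tail p k := Summable.sum_le_tsum _ (fun j _ => hnn _) (summable_shift hp (k+1))
  have hT : 0 < tail p k := lt_of_lt_of_le hDpos hDT
  rw [Real.dist_eq, sub_zero, abs_of_nonneg (div_nonneg (hnn _) hT.le)]
  have h2 : 1/δ * p (k + c) < D := (lt_div_iff₀ hpc).mp hsum
  have h3 : p (k + c) < δ * D := by
    have h4 := mul_lt_mul_of_pos_left h2 hδ
    rwa [show δ * (1/δ * p (k+c)) = p (k+c) by field_simp] at h4
  calc p (k + c) / tail p k ≤ p (k + c) / D := by gcongr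
  _ < δ := by rw [div_lt_iff₀ hDpos]; linarith

private lemma upper_bound (p : ℕ → ℝ) (hnn : ∀ k, 0 ≤ p k) (hp : Summable p)
    (h l₀ ν : ℕ) (hh : 0 < h) (η : ℝ) (hη : 0 ≤ η) (k : ℕ)
    (hb : ∀ m, k ≤ m → ∀ j ≤ h, p (m + j) ≤ (1 + η) * p m) :
    (h : ℝ) * ∑' l : ℕ, p (k + (l₀ + 1 + l) * h + ν) ≤ (1 + η) * tail p k := by
  set F : ℕ × Fin h → ℝ := fun x => p (k + (l₀ + 1 + x.1) * h + ν) with hF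
  set G : ℕ → ℝ := fun j => (1 + η) * p (k + 1 + j) with hG
  set e : ℕ × Fin h → ℕ := fun x => (l₀ + 1 + x.1) * h + ν - 1 - x.2 with he
  have hkey : ∀ x : ℕ × Fin h, (k + 1 + e x) + (x.2 : ℕ) = k + (l₀ + 1 + x.1) * h + ν := by
    rintro ⟨l, r⟩
    have hAh : h ≤ (l₀ + 1 + l) * h := Nat.le_mul_of_pos_left h (by omega)
    have hr : (r : ℕ) < h := r.2
    simp only [he]
    generalize (l₀ + 1 + l) * h = x at hAh ⊢
    omega
  have hinj : Function.Injective e := by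
    rintro ⟨l, r⟩ ⟨l', r'⟩ hll'
    have h1 : h ≤ (l₀ + 1 + l) * h := Nat.le_mul_of_pos_left h (by omega)
    have h2 : h ≤ (l₀ + 1 + l') * h := Nat.le_mul_of_pos_left h (by omega)
    have hr : (r : ℕ) < h := r.2
    have hr' : (r' : ℕ) < h := r'.2
    simp only [he] at hll'
    have hmod : (l₀ + 1 + l) * h + (r' : ℕ) = (l₀ + 1 + l') * h + (r : ℕ) := by
      generalize (l₀ + 1 + l) * h = x at h1 hll' ⊢
      generalize (l₀ + 1 + l') * h = y at h2 hll' ⊢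
      omega
    have hrr : (r : ℕ) = (r' : ℕ) := by
      have h3 := congrArg (· % h) hmod
      exact (by simpa [Nat.mul_add_mod', Nat.mod_eq_of_lt hr, Nat.mod_eq_of_lt hr'] using h3 :
        (r' : ℕ) = r).symm
    have hml : (l₀ + 1 + l) * h = (l₀ + 1 + l') * h := by omega
    have hl : l₀ + 1 + l = l₀ + 1 + l' := Nat.eq_of_mul_eq_mul_right hh hml
    have : l = l' := by omega
    subst this
    exact Prod.ext rfl (Fin.ext hrr)
  have hle : ∀ x : ℕ × Fin h, F x ≤ G (e x) := by
    intro x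
    have h1 := hb (k + 1 + e x) (by omega) (x.2 : ℕ) x.2.2.le
    rw [hkey x] at h1
    exact h1
  have hGsum : Summable G := (summable_shift hp (k + 1)).mul_left (1 + η)
  have hFsum : Summable F :=
    Summable.of_nonneg_of_le (fun x => hnn _) hle (hGsum.comp_injective hinj)
  have hcomp : ∑' x, F x ≤ ∑' j, G j :=
    Summable.tsum_le_tsum_of_inj e hinj (fun c _ => mul_nonneg (by linarith) (hnn _)) hle hFsum hGsum
  have hFval : ∑' x, F x = (h : ℝ) * ∑' l : ℕ, p (k + (l₀ + 1 + l) * h + ν) := by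
    rw [Summable.tsum_prod hFsum]
    have : ∀ l : ℕ, ∑' r : Fin h, F (l, r) = (h : ℝ) * p (k + (l₀ + 1 + l) * h + ν) := by
      intro l
      rw [tsum_fintype]
      simp [hF, Finset.sum_const, mul_comm]
    rw [tsum_congr this, tsum_mul_left]
  have hGval : ∑' j, G j = (1 + η) * tail p k := by
    rw [hG, tsum_mul_left]; rfl
  rw [← hFval, ← hGval]
  exact hcomp

private lemma exists_rep (h ν t : ℕ) (hh : 0 < h) (hν : ν < h) (ht : 1 ≤ t) :
    ∃ l r, r < h ∧ l * h + ν = t + r := by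
  rcases le_or_gt t ν with hc | hc
  · exact ⟨0, ν - t, by omega, by omega⟩
  · obtain ⟨l, s, hs, hds⟩ : ∃ l s, s < h ∧ t - ν + h - 1 = h * l + s :=
      ⟨(t - ν + h - 1) / h, (t - ν + h - 1) % h, Nat.mod_lt _ hh, (Nat.div_add_mod _ _).symm⟩
    refine ⟨l, h - 1 - s, by omega, ?_⟩
    rw [mul_comm]
    generalize h * l = x at hds ⊢
    omega

private lemma lower_bound (p : ℕ → ℝ) (hnn : ∀ k, 0 ≤ p k) (hp : Summable p)
    (h ν : ℕ) (hh : 0 < h) (hν : ν < h) (η : ℝ) (k : ℕ)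
    (hb : ∀ m, k ≤ m → ∀ j ≤ h, (1 - η) * p m ≤ p (m + j)) :
    (1 - η) * tail p k ≤ (h : ℝ) * ∑' l : ℕ, p (k + l * h + ν) := by
  set F : ℕ → ℝ := fun j => (1 - η) * p (k + 1 + j) with hF
  set G : ℕ × Fin h → ℝ := fun x => p (k + x.1 * h + ν) with hG
  have hex : ∀ j : ℕ, ∃ lr : ℕ × Fin h, lr.1 * h + ν = (j + 1) + (lr.2 : ℕ) := by
    intro j
    obtain ⟨l, r, hr, hlr⟩ := exists_rep h ν (j + 1) hh hν (by omega)
    exact ⟨(l, ⟨r, hr⟩), hlr⟩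
  choose e hrep using hex
  have hinj : Function.Injective e := by
    intro a b hab
    have h1 := hrep a
    have h2 := hrep b
    rw [hab] at h1
    generalize (e b).1 * h = x at h1 h2
    omega
  have hle : ∀ j : ℕ, F j ≤ G (e j) := by
    intro j
    have h1 := hrep j
    have h2 : k + (e j).1 * h + ν = (k + 1 + j) + ((e j).2 : ℕ) := by
      generalize (e j).1 * h = x at h1 ⊢
      omega
    show (1 - η) * p (k + 1 + j) ≤ p (k + (e j).1 * h + ν)
    rw [h2]
    exact hb (k + 1 + j) (by omega) _ (e j).2.2.le
  have hFsum : Summable F := (summable_shift hp (k + 1)).mul_left (1 - η)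
  have hprog : Summable fun l : ℕ => p (k + l * h + ν) :=
    (summable_prog hp k 0 h ν hh).congr (fun l => by rw [Nat.zero_add])
  have hGsum : Summable G := by
    apply (summable_prod_of_nonneg (fun x => hnn _)).mpr
    constructor
    · intro l
      exact .of_finite
    · apply Summable.congr (f := fun l : ℕ => (h : ℝ) * p (k + l * h + ν))
        (hprog.mul_left _)
      intro l
      rw [tsum_fintype]
      simp [hG, Finset.sum_const, mul_comm]
  have hcomp : ∑' j, F j ≤ ∑' x, G x :=
    Summable.tsum_le_tsum_of_inj e hinj (fun c _ => hnn _) hle hFsum hGsum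
  have hFval : ∑' j, F j = (1 - η) * tail p k := by
    rw [hF, tsum_mul_left]; rfl
  have hGval : ∑' x, G x = (h : ℝ) * ∑' l : ℕ, p (k + l * h + ν) := by
    rw [Summable.tsum_prod hGsum]
    have : ∀ l : ℕ, ∑' r : Fin h, G (l, r) = (h : ℝ) * p (k + l * h + ν) := by
      intro l
      rw [tsum_fintype]
      simp [hG, Finset.sum_const, mul_comm]
    rw [tsum_congr this, tsum_mul_left]
  rw [← hFval, ← hGval]
  exact hcomp

/-- If `U` is locally long-tailed with span one, then for every `h ≥ 1`, `l₀ ∈ ℤ₊` and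
`ν ∈ {0,…,h-1}`, `(Σ_{l ≥ l₀} P(U = k + lh + ν)) / P(U > k) → 1/h`. -/
theorem stmt1 (p : ℕ → ℝ) (hnn : ∀ k, 0 ≤ p k) (hsum : HasSum p 1)
    (hpos : ∀ᶠ k in atTop, 0 < p k)
    (hll : Tendsto (fun k => p (k + 1) / p k) atTop (nhds 1))
    (h : ℕ) (hh : 0 < h) (l₀ : ℕ) (ν : ℕ) (hν : ν < h) :
    Tendsto (fun k => (∑' l : ℕ, p (k + (l₀ + l) * h + ν)) / tail p k)
      atTop (nhds (1 / (h : ℝ))) := by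
  have hp : Summable p := hsum.summable
  have hh' : (0:ℝ) < h := by exact_mod_cast hh
  rw [Metric.tendsto_nhds]
  intro δ hδ
  set η : ℝ := min (1/2) (δ * h / 8) with hηdef
  have hη0 : 0 < η := lt_min (by norm_num) (by positivity)
  have hηh : η / h ≤ δ / 8 := by
    rw [div_le_iff₀ hh']
    calc η ≤ δ * h / 8 := min_le_right _ _
    _ = δ / 8 * h := by ring
  have hU : ∀ᶠ m in atTop, ∀ j ∈ Finset.range (h+1),
      (1-η) * p m ≤ p (m+j) ∧ p (m+j) ≤ (1+η) * p m := by
    rw [eventually_all_finset]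
    intro j _
    have hev := (ratio_shift p hpos hll j).eventually (Metric.ball_mem_nhds (1:ℝ) hη0)
    filter_upwards [hev, hpos] with m hm hpm
    rw [Real.dist_eq, abs_lt] at hm
    have hpj : p (m + j) = p (m+j) / p m * p m := (div_mul_cancel₀ _ hpm.ne').symm
    constructor
    · rw [hpj]; exact mul_le_mul_of_nonneg_right (by linarith [hm.1]) hpm.le
    · rw [hpj]; exact mul_le_mul_of_nonneg_right (by linarith [hm.2]) hpm.le
  obtain ⟨K, hK⟩ := eventually_atTop.mp hU
  have hSsplit : ∀ k : ℕ, (∑' l : ℕ, p (k + (l₀ + l) * h + ν))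
      = p (k + l₀ * h + ν) + ∑' l : ℕ, p (k + (l₀ + 1 + l) * h + ν) := by
    intro k
    rw [Summable.tsum_eq_zero_add (summable_prog hp k l₀ h ν hh)]
    have e1 : k + (l₀ + 0) * h + ν = k + l₀ * h + ν := by norm_num
    rw [e1]
    congr 1
    exact tsum_congr fun l => by rw [show l₀ + (l + 1) = l₀ + 1 + l from by omega]
  have hTsplit : ∀ k : ℕ, (∑' l : ℕ, p (k + l * h + ν))
      = (∑ l ∈ Finset.range l₀, p (k + l * h + ν)) + ∑' l : ℕ, p (k + (l₀ + l) * h + ν) := by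
    intro k
    have hprog : Summable fun l : ℕ => p (k + l * h + ν) :=
      (summable_prog hp k 0 h ν hh).congr (fun l => by rw [Nat.zero_add])
    rw [← Summable.sum_add_tsum_nat_add l₀ hprog]
    congr 1
    exact tsum_congr fun l => by rw [Nat.add_comm l l₀]
  have hE1 : ∀ᶠ k in atTop, p (k + (l₀ * h + ν)) / tail p k < δ / 4 :=
    (err_tendsto p hnn hp hpos hll (l₀ * h + ν)).eventually (gt_mem_nhds (by positivity))
  have hE2 : ∀ᶠ k in atTop, ∀ l ∈ Finset.range l₀,
      p (k + (l * h + ν)) / tail p k < δ / (4 * (l₀ + 1)) := by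
    rw [eventually_all_finset]
    intro l _
    exact (err_tendsto p hnn hp hpos hll (l * h + ν)).eventually (gt_mem_nhds (by positivity))
  have hTpos : ∀ᶠ k in atTop, 0 < tail p k := by
    filter_upwards [(tendsto_add_atTop_nat 1).eventually hpos] with k hk
    have h0 : p (k + 1 + 0) ≤ tail p k :=
      Summable.le_tsum (summable_shift hp (k+1)) 0 (fun j _ => hnn _)
    rw [add_zero] at h0
    exact lt_of_lt_of_le hk h0
  filter_upwards [eventually_ge_atTop K, hE1, hE2, hTpos] with k hkK hE1k hE2k hTk
  have hbub : ∀ m, k ≤ m → ∀ j ≤ h, p (m + j) ≤ (1 + η) * p m :=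
    fun m hm j hj => (hK m (le_trans hkK hm) j (Finset.mem_range.mpr (by omega))).2
  have hblb : ∀ m, k ≤ m → ∀ j ≤ h, (1 - η) * p m ≤ p (m + j) :=
    fun m hm j hj => (hK m (le_trans hkK hm) j (Finset.mem_range.mpr (by omega))).1
  have hup := upper_bound p hnn hp h l₀ ν hh η hη0.le k hbub
  have hlow := lower_bound p hnn hp h ν hh hν η k hblb
  rw [hTsplit k, mul_add] at hlow
  -- error bounds
  have hP0 : p (k + l₀ * h + ν) / tail p k < δ / 4 := by
    rw [show k + l₀ * h + ν = k + (l₀ * h + ν) from by omega]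
    exact hE1k
  have hCT : (∑ l ∈ Finset.range l₀, p (k + l * h + ν)) / tail p k ≤ δ / 4 := by
    rw [Finset.sum_div]
    calc ∑ l ∈ Finset.range l₀, p (k + l * h + ν) / tail p k
        ≤ ∑ _l ∈ Finset.range l₀, δ / (4 * (l₀ + 1)) := by
          apply Finset.sum_le_sum
          intro l hl
          have h5 := hE2k l hl
          rw [show k + (l * h + ν) = k + l * h + ν from by omega] at h5
          exact h5.le
    _ = l₀ * (δ / (4 * (l₀ + 1))) := by
          rw [Finset.sum_const, Finset.card_range, nsmul_eq_mul]
    _ ≤ δ / 4 := by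
          have hl : (0:ℝ) ≤ l₀ := Nat.cast_nonneg _
          have hne : ((l₀:ℝ) + 1) ≠ 0 := by positivity
          calc (l₀:ℝ) * (δ / (4 * (l₀ + 1)))
              ≤ ((l₀:ℝ) + 1) * (δ / (4 * (l₀ + 1))) :=
                mul_le_mul_of_nonneg_right (by linarith) (by positivity)
          _ = δ / 4 := by field_simp
  -- combine
  have hC' : (∑ l ∈ Finset.range l₀, p (k + l * h + ν)) ≤ δ / 4 * tail p k :=
    (div_le_iff₀ hTk).mp hCT
  have hη' : η ≤ δ / 8 * h := (div_le_iff₀ hh').mp hηh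
  have hP0' : 0 ≤ p (k + l₀ * h + ν) / tail p k := div_nonneg (hnn _) hTk.le
  have hS1T : (∑' l : ℕ, p (k + (l₀ + 1 + l) * h + ν)) / tail p k ≤ (1 + η) / h := by
    rw [div_le_div_iff₀ hTk hh']
    calc (∑' l : ℕ, p (k + (l₀ + 1 + l) * h + ν)) * h
        = h * ∑' l : ℕ, p (k + (l₀ + 1 + l) * h + ν) := mul_comm _ _
    _ ≤ (1 + η) * tail p k := hup
  have hexp : (1 + η) / (h:ℝ) = 1/h + η/h := by ring
  have hXub : (∑' l : ℕ, p (k + (l₀ + l) * h + ν)) / tail p k < 1/h + δ/2 := by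
    rw [hSsplit k, add_div]
    have h6 : η / (h:ℝ) ≤ δ/8 := hηh
    linarith [hP0, hS1T]
  have hXlb : 1/(h:ℝ) - δ/2 < (∑' l : ℕ, p (k + (l₀ + l) * h + ν)) / tail p k := by
    rw [lt_div_iff₀ hTk]
    -- goal : (1/h - δ/2) * tail p k < ∑' ...
    have hkey : (1 - δ * h / 2) * tail p k < (h:ℝ) * ∑' l : ℕ, p (k + (l₀ + l) * h + ν) := by
      have hmul1 : η * tail p k ≤ δ / 8 * h * tail p k :=
        mul_le_mul_of_nonneg_right hη' hTk.le
      have hmul2 : (h:ℝ) * (∑ l ∈ Finset.range l₀, p (k + l * h + ν))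
          ≤ (h:ℝ) * (δ / 4 * tail p k) :=
        mul_le_mul_of_nonneg_left hC' hh'.le
      have hmul3 : 0 < δ * ((h:ℝ) * tail p k) := by positivity
      nlinarith [hlow]
    have h7 : ((1:ℝ)/h - δ/2) = (1 - δ*h/2)/h := by field_simp
    rw [h7, div_mul_eq_mul_div, div_lt_iff₀ hh']
    calc (1 - δ*h/2) * tail p k < (h:ℝ) * ∑' l : ℕ, p (k + (l₀ + l) * h + ν) := hkey
    _ = (∑' l : ℕ, p (k + (l₀ + l) * h + ν)) * h := mul_comm _ _
  rw [Real.dist_eq, abs_lt]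
  constructor <;> [linarith [hXlb]; linarith [hXub]]
end

section
/- Let {F(k)} and {F_j(k)}, j=1,…,m, be probability mass functions on ℤ₊. Suppose F is locally subexponential with span one and lim_{k→∞} F_j(k)/F(k) = c_j ∈ [0,∞) for each j. Then for any ε > 0 there exists C_ε ∈ (0,∞) such that for all k > sup{k : F(k)=0} and all positive integers n₁,…,n_m, the convolution satisfies F₁^{*n₁} * F₂^{*n₂} * ⋯ * F_m^{*n_m}(k) ≤ C_ε (1+ε)^{n₁+⋯+n_m} F(k). -/
open Filter Topology

/-- Point mass at 0 (unit for convolution). -/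
noncomputable def delta0 : ℕ → ℝ := fun k => if k = 0 then 1 else 0

/-- Convolution of a list of sequences. -/
noncomputable def convList : List (ℕ → ℝ) → ℕ → ℝ
  | [] => delta0
  | f :: fs => conv f (convList fs)

lemma sum_range_sub (f : ℕ → ℝ) (k : ℕ) :
    ∑ l ∈ Finset.range (k + 1), f (k - l) = ∑ l ∈ Finset.range (k + 1), f l := by
  simpa using Finset.sum_range_reflect f (k + 1)

lemma conv_nonneg' {f g : ℕ → ℝ} (hf : ∀ k, 0 ≤ f k) (hg : ∀ k, 0 ≤ g k) (k : ℕ) :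
    0 ≤ conv f g k :=
  Finset.sum_nonneg fun _ _ => mul_nonneg (hf _) (hg _)

lemma convList_nonneg {L : List (ℕ → ℝ)} (h : ∀ g ∈ L, ∀ k, 0 ≤ g k) (k : ℕ) :
    0 ≤ convList L k := by
  induction L generalizing k with
  | nil =>
    unfold convList delta0
    split <;> norm_num
  | cons f fs ih =>
    exact conv_nonneg' (h f (by simp)) (fun i => ih (fun g hg => h g (by simp [hg])) i) k

lemma convList_le_one {L : List (ℕ → ℝ)}
    (h : ∀ g ∈ L, (∀ k, 0 ≤ g k) ∧ HasSum g 1) (k : ℕ) :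
    convList L k ≤ 1 := by
  induction L generalizing k with
  | nil =>
    unfold convList delta0
    split <;> norm_num
  | cons f fs ih =>
    have hf := h f (by simp)
    have hfs : ∀ g ∈ fs, (∀ k, 0 ≤ g k) ∧ HasSum g 1 := fun g hg => h g (by simp [hg])
    show conv f (convList fs) k ≤ 1
    calc conv f (convList fs) k
        ≤ ∑ l ∈ Finset.range (k + 1), f (k - l) * 1 :=
          Finset.sum_le_sum fun l _ => mul_le_mul_of_nonneg_left (ih hfs l) (hf.1 _)
      _ = ∑ l ∈ Finset.range (k + 1), f l := by
          simp only [mul_one]; exact sum_range_sub f k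
      _ ≤ 1 := sum_le_hasSum _ (fun i _ => hf.1 i) hf.2

lemma sum_Ico_top (g : ℕ → ℝ) (k K : ℕ) (h : K ≤ k + 1) :
    ∑ l ∈ Finset.Ico (k + 1 - K) (k + 1), g l = ∑ j ∈ Finset.range K, g (k - j) := by
  apply Finset.sum_nbij' (fun l => k - l) (fun j => k - j)
  · intro a ha; simp only [Finset.mem_Ico, Finset.mem_range] at *; omega
  · intro a ha; simp only [Finset.mem_Ico, Finset.mem_range] at *; omega
  · intro a ha; simp only [Finset.mem_Ico] at ha; omega
  · intro a ha; simp only [Finset.mem_range] at ha; omega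
  · intro a ha; simp only [Finset.mem_Ico] at ha; congr 1; omega

lemma ratio_tendsto (F : ℕ → ℝ) (hpos : ∀ᶠ k in atTop, 0 < F k)
    (h1 : Tendsto (fun k => F (k + 1) / F k) atTop (nhds 1)) (j : ℕ) :
    Tendsto (fun k => F k / F (k + j)) atTop (nhds 1) := by
  induction j with
  | zero =>
    have heq : (fun _ => (1:ℝ)) =ᶠ[atTop] fun k => F k / F (k + 0) := by
      filter_upwards [hpos] with k hk
      rw [add_zero, div_self hk.ne']
    exact Tendsto.congr' heq tendsto_const_nhds
  | succ j ih =>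
    have h2 : Tendsto (fun k => F k / F (k + 1)) atTop (nhds 1) := by
      have h := h1.inv₀ one_ne_zero
      rw [inv_one] at h
      apply h.congr'
      filter_upwards [hpos] with k hk
      rw [inv_div]
    have h3 : Tendsto (fun k => F (k + j) / F (k + j + 1)) atTop (nhds 1) :=
      h2.comp (tendsto_add_atTop_nat j)
    have h4 := ih.mul h3
    rw [mul_one] at h4
    apply h4.congr'
    filter_upwards [(tendsto_add_atTop_nat j).eventually hpos] with k hk
    have hne : F (k + j) ≠ 0 := hk.ne'
    show F k / F (k + j) * (F (k + j) / F (k + j + 1)) = F k / F (k + (j + 1))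
    rw [show k + (j + 1) = k + j + 1 from rfl]
    field_simp

set_option maxHeartbeats 1000000 in
/-- Uniform Kesten-type bound for convolutions of pmfs asymptotically proportional to a
locally subexponential pmf `F` (Proposition A.6 of the paper). The condition
`k > sup{k : F(k)=0}` is rendered as `∀ l ≥ k, 0 < F l`. -/
theorem stmt4 (m : ℕ) (F : ℕ → ℝ) (Fj : Fin m → ℕ → ℝ)
    (hFnn : ∀ k, 0 ≤ F k) (hFsum : HasSum F 1)
    (hFjnn : ∀ j k, 0 ≤ Fj j k) (hFjsum : ∀ j, HasSum (Fj j) 1)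
    (hSloc : SLocOne F)
    (c : Fin m → ℝ) (hc : ∀ j, 0 ≤ c j)
    (hlim : ∀ j, Tendsto (fun k => Fj j k / F k) atTop (nhds (c j))) :
    ∀ ε : ℝ, 0 < ε → ∃ C : ℝ, 0 < C ∧
      ∀ (n : Fin m → ℕ), (∀ j, 0 < n j) →
        ∀ k : ℕ, (∀ l, k ≤ l → 0 < F l) →
          convList (((List.finRange m).flatMap fun j => List.replicate (n j) (Fj j))) k
            ≤ C * (1 + ε) ^ (∑ j, n j) * F k := by
  intro ε hε
  classical
  obtain ⟨hFpos, hFrat, hFconv⟩ := hSloc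
  -- the threshold beyond which F is positive
  have hex : ∃ N, ∀ l, N ≤ l → 0 < F l := eventually_atTop.mp hFpos
  set kstar := Nat.find hex with hkstar_def
  have hkstar : ∀ l, kstar ≤ l → 0 < F l := Nat.find_spec hex
  clear_value kstar
  -- a uniform domination constant
  set d : ℝ := (∑ j, c j) + 1 with hd_def
  have hd1 : (1 : ℝ) ≤ d := by
    have : 0 ≤ ∑ j, c j := Finset.sum_nonneg fun j _ => hc j
    simp only [hd_def]; linarith
  have hd0 : (0 : ℝ) < d := by linarith
  have hcd : ∀ j, c j < d := by
    intro j
    have h1 : c j ≤ ∑ j', c j' := Finset.single_le_sum (fun j' _ => hc j') (Finset.mem_univ j)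
    simp only [hd_def]; linarith
  clear_value d
  have hK₀ev : ∀ᶠ k in atTop, ∀ j, Fj j k ≤ d * F k := by
    rw [eventually_all]
    intro j
    filter_upwards [(hlim j).eventually_lt_const (hcd j), hFpos] with k h1 h2
    have := (div_lt_iff₀ h2).mp h1
    linarith
  obtain ⟨K₀, hK₀⟩ := eventually_atTop.mp hK₀ev
  -- the small parameter δ
  set δ : ℝ := min ε 1 / (2 * (5 * d + 1)) with hδ_def
  have hδ0 : 0 < δ := by
    apply div_pos (lt_min hε one_pos)
    linarith
  have hδ1 : δ ≤ 1 := by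
    rw [hδ_def, div_le_one (by linarith)]
    have : min ε 1 ≤ 1 := min_le_right _ _
    linarith
  have hδε : (5 * d + 1) * δ ≤ ε / 2 := by
    have h5 : (5 * d + 1) ≠ 0 := by positivity
    have heq : (5 * d + 1) * (min ε 1 / (2 * (5 * d + 1))) = min ε 1 / 2 := by
      field_simp
    rw [hδ_def, heq]
    have := min_le_left ε (1:ℝ)
    linarith
  clear_value δ
  -- choose K with mass 1 - δ, K ≥ K₀, K ≥ kstar
  have hsumev : ∀ᶠ n in atTop, 1 - δ < ∑ l ∈ Finset.range n, F l :=
    hFsum.tendsto_sum_nat.eventually_const_lt (by linarith)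
  obtain ⟨K₁, hK₁⟩ := eventually_atTop.mp hsumev
  set K := K₁ + K₀ + kstar + 1 with hK_def
  have hKsum : 1 - δ ≤ ∑ l ∈ Finset.range K, F l := (hK₁ K (by omega)).le
  clear_value K
  -- ratio control thresholds
  have hratev : ∀ᶠ k' in atTop, ∀ j ∈ Finset.range K,
      (1 - δ) * F (k' + j) ≤ F k' ∧ F k' ≤ (1 + δ) * F (k' + j) := by
    rw [eventually_all_finset]
    intro j _
    have hr := ratio_tendsto F hFpos hFrat j
    filter_upwards [hr.eventually_lt_const (by linarith : (1:ℝ) < 1 + δ),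
      hr.eventually_const_lt (by linarith : 1 - δ < (1:ℝ)),
      (tendsto_add_atTop_nat j).eventually hFpos] with k' h1 h2 h3
    constructor
    · exact ((lt_div_iff₀ h3).mp h2).le
    · exact ((div_lt_iff₀ h3).mp h1).le
  obtain ⟨T, hT⟩ := eventually_atTop.mp hratev
  have hconvev : ∀ᶠ k in atTop, conv F F k ≤ (2 + δ) * F k := by
    filter_upwards [hFconv.eventually_lt_const (by linarith : (2:ℝ) < 2 + δ), hFpos]
      with k h1 h2
    exact ((div_lt_iff₀ h2).mp h1).le
  obtain ⟨T₂, hT₂⟩ := eventually_atTop.mp hconvev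
  set K₂ := 2 * K + T + T₂ + 1 with hK₂_def
  have hup : ∀ j k, j < K → K₂ ≤ k → F (k - j) ≤ (1 + δ) * F k := by
    intro j k hj hk
    have h := (hT (k - j) (by omega) j (Finset.mem_range.mpr hj)).2
    rwa [Nat.sub_add_cancel (by omega)] at h
  have hdn : ∀ j k, j < K → K₂ ≤ k → (1 - δ) * F k ≤ F (k - j) := by
    intro j k hj hk
    have h := (hT (k - j) (by omega) j (Finset.mem_range.mpr hj)).1
    rwa [Nat.sub_add_cancel (by omega)] at h
  clear_value K₂
  -- constants M and A
  set M : ℝ := 1 + ∑ l ∈ Finset.range K₂, (F l)⁻¹ with hM_def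
  have hM1 : 1 ≤ M := by
    have : 0 ≤ ∑ l ∈ Finset.range K₂, (F l)⁻¹ :=
      Finset.sum_nonneg fun l _ => inv_nonneg.mpr (hFnn l)
    simp only [hM_def]; linarith
  have hMk : ∀ k, k < K₂ → (F k)⁻¹ ≤ M := by
    intro k hk
    have := Finset.single_le_sum (f := fun l => (F l)⁻¹)
      (fun l _ => inv_nonneg.mpr (hFnn l)) (Finset.mem_range.mpr hk)
    simp only [hM_def]; linarith
  clear_value M
  set A : ℝ := M + d + 2 * K * d * (1 + δ) / ε with hA_def
  have hKd_nn : (0:ℝ) ≤ 2 * K * d * (1 + δ) / ε := by positivity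
  have hAM : M ≤ A := by simp only [hA_def]; linarith
  have hA0 : 0 < A := by linarith
  have hAd : d ≤ A := by simp only [hA_def]; linarith
  have hAK : 2 * (K:ℝ) * d * (1 + δ) ≤ A * ε := by
    have h : 2 * (K:ℝ) * d * (1 + δ) / ε ≤ A := by simp only [hA_def]; linarith
    exact (div_le_iff₀ hε).mp h
  clear_value A
  -- partial sums of the pmfs
  have hFj_sum_le : ∀ (j) (s : Finset ℕ), ∑ i ∈ s, Fj j i ≤ 1 := fun j s =>
    sum_le_hasSum s (fun i _ => hFjnn j i) (hFjsum j)
  -- the key uniform bound, by induction on the list of factors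
  have key : ∀ L : List (ℕ → ℝ), (∀ g ∈ L, ∃ j, g = Fj j) →
      ∀ k, kstar ≤ k → convList L k ≤ A * (1 + ε) ^ L.length * F k := by
    intro L
    induction L with
    | nil =>
      intro _ k hk
      have hFk := hkstar k hk
      by_cases h0 : k = 0
      · subst h0
        have h1 : (F 0)⁻¹ ≤ M := hMk 0 (by omega)
        have h2 : convList [] 0 = 1 := by unfold convList delta0; simp
        rw [h2]
        have h3 : (1:ℝ) = (F 0)⁻¹ * F 0 := by rw [inv_mul_cancel₀ hFk.ne']
        calc (1:ℝ) = (F 0)⁻¹ * F 0 := h3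
          _ ≤ M * F 0 := mul_le_mul_of_nonneg_right h1 hFk.le
          _ ≤ A * F 0 := mul_le_mul_of_nonneg_right hAM hFk.le
          _ = A * (1 + ε) ^ (List.length ([] : List (ℕ → ℝ))) * F 0 := by simp
      · have h2 : convList [] k = 0 := by unfold convList delta0; simp [h0]
        rw [h2]
        have : (0:ℝ) ≤ A * (1 + ε) ^ (List.length ([] : List (ℕ → ℝ))) * F k := by
          apply mul_nonneg (mul_nonneg hA0.le (by positivity)) (hFnn k)
        linarith
    | cons f fs ih =>
      intro hmem k hk
      obtain ⟨j₀, hf⟩ := hmem f (by simp)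
      subst hf
      have ihfs := ih (fun g hg => hmem g (by simp [hg]))
      have hpm : ∀ g ∈ (Fj j₀ :: fs), (∀ i, 0 ≤ g i) ∧ HasSum g 1 := by
        intro g hg
        obtain ⟨j, rfl⟩ := hmem g hg
        exact ⟨hFjnn j, hFjsum j⟩
      have hHnn : ∀ l, 0 ≤ convList fs l :=
        convList_nonneg (fun g hg i => (hpm g (by simp [hg])).1 i)
      have hH1 : ∀ l, convList fs l ≤ 1 := fun l =>
        convList_le_one (fun g hg => hpm g (by simp [hg])) l
      set H := convList fs with hH_def
      set a := A * (1 + ε) ^ fs.length with ha_def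
      have hpow1 : (1:ℝ) ≤ (1 + ε) ^ fs.length := one_le_pow₀ (by linarith : (1:ℝ) ≤ 1 + ε)
      have ha0 : 0 < a := by
        apply mul_pos hA0; positivity
      have haA : A ≤ a := le_mul_of_one_le_right hA0.le hpow1
      have hHa : ∀ l, kstar ≤ l → H l ≤ a * F l := ihfs
      clear_value a
      have hgoal_eq : A * (1 + ε) ^ (List.length (Fj j₀ :: fs)) = a * (1 + ε) := by
        simp only [List.length_cons, pow_succ, ha_def]; ring
      rcases lt_or_ge k K₂ with hkK₂ | hkK₂
      · -- small k : use that the convolution is at most 1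
        have hFk := hkstar k hk
        have h1 : convList (Fj j₀ :: fs) k ≤ 1 := convList_le_one hpm k
        have h2 : (1:ℝ) ≤ M * F k := by
          have hi := hMk k hkK₂
          calc (1:ℝ) = (F k)⁻¹ * F k := by rw [inv_mul_cancel₀ hFk.ne']
            _ ≤ M * F k := mul_le_mul_of_nonneg_right hi hFk.le
        have h3 : M * F k ≤ A * (1 + ε) ^ (List.length (Fj j₀ :: fs)) * F k := by
          apply mul_le_mul_of_nonneg_right _ (hFnn k)
          calc M ≤ A := hAM
            _ = A * 1 := (mul_one A).symm
            _ ≤ A * (1 + ε) ^ (List.length (Fj j₀ :: fs)) :=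
                mul_le_mul_of_nonneg_left (one_le_pow₀ (by linarith : (1:ℝ) ≤ 1 + ε)) hA0.le
        linarith
      · -- large k : the three-fold splitting argument
        have hk2K : 2 * K ≤ k := by omega
        have hexp : convList (Fj j₀ :: fs) k
            = ∑ l ∈ Finset.Ico 0 (k + 1), Fj j₀ (k - l) * H l := by
          rw [← Finset.range_eq_Ico]; rfl
        have hsplit1 :
            ∑ l ∈ Finset.Ico 0 K, Fj j₀ (k - l) * H l
              + ∑ l ∈ Finset.Ico K (k + 1), Fj j₀ (k - l) * H l
            = ∑ l ∈ Finset.Ico 0 (k + 1), Fj j₀ (k - l) * H l :=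
          Finset.sum_Ico_consecutive _ (Nat.zero_le K) (by omega)
        have hsplit2 :
            ∑ l ∈ Finset.Ico K (k + 1 - K), Fj j₀ (k - l) * H l
              + ∑ l ∈ Finset.Ico (k + 1 - K) (k + 1), Fj j₀ (k - l) * H l
            = ∑ l ∈ Finset.Ico K (k + 1), Fj j₀ (k - l) * H l :=
          Finset.sum_Ico_consecutive _ (by omega) (by omega)
        -- part 1 : small l
        have hS1 : ∑ l ∈ Finset.Ico 0 K, Fj j₀ (k - l) * H l
            ≤ (K : ℝ) * (d * ((1 + δ) * F k)) := by
          have hterm : ∀ l ∈ Finset.Ico 0 K, Fj j₀ (k - l) * H l ≤ d * ((1 + δ) * F k) := by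
            intro l hl
            simp only [Finset.mem_Ico] at hl
            have e1 : Fj j₀ (k - l) ≤ d * F (k - l) := hK₀ (k - l) (by omega) j₀
            have e2 : F (k - l) ≤ (1 + δ) * F k := hup l k hl.2 hkK₂
            calc Fj j₀ (k - l) * H l ≤ Fj j₀ (k - l) * 1 :=
                  mul_le_mul_of_nonneg_left (hH1 l) (hFjnn j₀ _)
              _ = Fj j₀ (k - l) := mul_one _
              _ ≤ d * F (k - l) := e1
              _ ≤ d * ((1 + δ) * F k) := mul_le_mul_of_nonneg_left e2 hd0.le
          calc ∑ l ∈ Finset.Ico 0 K, Fj j₀ (k - l) * H l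
              ≤ (Finset.Ico 0 K).card • (d * ((1 + δ) * F k)) :=
                Finset.sum_le_card_nsmul _ _ _ hterm
            _ = (K : ℝ) * (d * ((1 + δ) * F k)) := by
                rw [Nat.card_Ico, nsmul_eq_mul]; norm_num
        -- the middle F ∗ F estimate
        have hmid : ∑ l ∈ Finset.Ico K (k + 1 - K), F (k - l) * F l ≤ 5 * δ * F k := by
          have e0 : conv F F k = ∑ l ∈ Finset.Ico 0 (k + 1), F (k - l) * F l := by
            rw [← Finset.range_eq_Ico]; rfl
          have s1 : ∑ l ∈ Finset.Ico 0 K, F (k - l) * F l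
                + ∑ l ∈ Finset.Ico K (k + 1), F (k - l) * F l
              = ∑ l ∈ Finset.Ico 0 (k + 1), F (k - l) * F l :=
            Finset.sum_Ico_consecutive _ (Nat.zero_le K) (by omega)
          have s2 : ∑ l ∈ Finset.Ico K (k + 1 - K), F (k - l) * F l
                + ∑ l ∈ Finset.Ico (k + 1 - K) (k + 1), F (k - l) * F l
              = ∑ l ∈ Finset.Ico K (k + 1), F (k - l) * F l :=
            Finset.sum_Ico_consecutive _ (by omega) (by omega)
          have hFk := hkstar k (by omega)
          have h1δFk : 0 ≤ (1 - δ) * F k := mul_nonneg (by linarith) (hFnn k)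
          have hE1 : (1 - δ) * F k * (1 - δ) ≤ ∑ l ∈ Finset.Ico 0 K, F (k - l) * F l := by
            calc (1 - δ) * F k * (1 - δ) ≤ (1 - δ) * F k * ∑ l ∈ Finset.range K, F l := by
                  apply mul_le_mul_of_nonneg_left _ h1δFk
                  linarith
              _ = ∑ l ∈ Finset.range K, (1 - δ) * F k * F l := Finset.mul_sum _ _ _
              _ = ∑ l ∈ Finset.Ico 0 K, (1 - δ) * F k * F l := by
                  rw [Finset.range_eq_Ico]
              _ ≤ ∑ l ∈ Finset.Ico 0 K, F (k - l) * F l := by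
                  apply Finset.sum_le_sum
                  intro l hl
                  simp only [Finset.mem_Ico] at hl
                  exact mul_le_mul_of_nonneg_right (hdn l k hl.2 hkK₂) (hFnn l)
          have hE3r : ∑ l ∈ Finset.Ico (k + 1 - K) (k + 1), F (k - l) * F l
              = ∑ j ∈ Finset.range K, F j * F (k - j) := by
            rw [sum_Ico_top (fun l => F (k - l) * F l) k K (by omega)]
            apply Finset.sum_congr rfl
            intro j hj
            simp only [Finset.mem_range] at hj
            have : k - (k - j) = j := by omega
            rw [this]
          have hE3 : (1 - δ) * F k * (1 - δ)
              ≤ ∑ l ∈ Finset.Ico (k + 1 - K) (k + 1), F (k - l) * F l := by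
            rw [hE3r]
            calc (1 - δ) * F k * (1 - δ) ≤ (1 - δ) * F k * ∑ j ∈ Finset.range K, F j := by
                  apply mul_le_mul_of_nonneg_left _ h1δFk
                  linarith
              _ = ∑ j ∈ Finset.range K, (1 - δ) * F k * F j := Finset.mul_sum _ _ _
              _ ≤ ∑ j ∈ Finset.range K, F j * F (k - j) := by
                  apply Finset.sum_le_sum
                  intro j hj
                  simp only [Finset.mem_range] at hj
                  calc (1 - δ) * F k * F j = F j * ((1 - δ) * F k) := by ring
                    _ ≤ F j * F (k - j) :=
                        mul_le_mul_of_nonneg_left (hdn j k hj hkK₂) (hFnn j)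
          have hFFk : conv F F k ≤ (2 + δ) * F k := hT₂ k (by omega)
          have hmid_eq : ∑ l ∈ Finset.Ico K (k + 1 - K), F (k - l) * F l
              = conv F F k - ∑ l ∈ Finset.Ico 0 K, F (k - l) * F l
                - ∑ l ∈ Finset.Ico (k + 1 - K) (k + 1), F (k - l) * F l := by
            rw [e0, ← s1, ← s2]; ring
          rw [hmid_eq]
          have hkey : (2 + δ) * F k - (1 - δ) * F k * (1 - δ) - (1 - δ) * F k * (1 - δ)
              ≤ 5 * δ * F k := by
            nlinarith [mul_nonneg (mul_nonneg hδ0.le hδ0.le) (hFnn k)]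
          linarith [hE1, hE3, hFFk, hkey]
        -- part 2 : middle range
        have hS2 : ∑ l ∈ Finset.Ico K (k + 1 - K), Fj j₀ (k - l) * H l
            ≤ d * a * (5 * δ * F k) := by
          have hterm : ∀ l ∈ Finset.Ico K (k + 1 - K),
              Fj j₀ (k - l) * H l ≤ d * a * (F (k - l) * F l) := by
            intro l hl
            simp only [Finset.mem_Ico] at hl
            have e1 : Fj j₀ (k - l) ≤ d * F (k - l) := hK₀ (k - l) (by omega) j₀
            have e2 : H l ≤ a * F l := hHa l (by omega)
            calc Fj j₀ (k - l) * H l ≤ (d * F (k - l)) * (a * F l) := by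
                  apply mul_le_mul e1 e2 (hHnn l)
                  exact mul_nonneg hd0.le (hFnn _)
              _ = d * a * (F (k - l) * F l) := by ring
          calc ∑ l ∈ Finset.Ico K (k + 1 - K), Fj j₀ (k - l) * H l
              ≤ ∑ l ∈ Finset.Ico K (k + 1 - K), d * a * (F (k - l) * F l) :=
                Finset.sum_le_sum hterm
            _ = d * a * ∑ l ∈ Finset.Ico K (k + 1 - K), F (k - l) * F l := by
                rw [Finset.mul_sum]
            _ ≤ d * a * (5 * δ * F k) :=
                mul_le_mul_of_nonneg_left hmid (mul_nonneg hd0.le ha0.le)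
        -- part 3 : l close to k
        have hS3 : ∑ l ∈ Finset.Ico (k + 1 - K) (k + 1), Fj j₀ (k - l) * H l
            ≤ (1 + δ) * (a * F k) := by
          rw [sum_Ico_top (fun l => Fj j₀ (k - l) * H l) k K (by omega)]
          have hterm : ∀ j ∈ Finset.range K,
              Fj j₀ (k - (k - j)) * H (k - j) ≤ Fj j₀ j * ((1 + δ) * (a * F k)) := by
            intro j hj
            simp only [Finset.mem_range] at hj
            have hjj : k - (k - j) = j := by omega
            rw [hjj]
            have h1 : H (k - j) ≤ a * F (k - j) := hHa (k - j) (by omega)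
            have h2 : F (k - j) ≤ (1 + δ) * F k := hup j k hj hkK₂
            have h3 : H (k - j) ≤ (1 + δ) * (a * F k) := by
              calc H (k - j) ≤ a * F (k - j) := h1
                _ ≤ a * ((1 + δ) * F k) := mul_le_mul_of_nonneg_left h2 ha0.le
                _ = (1 + δ) * (a * F k) := by ring
            exact mul_le_mul_of_nonneg_left h3 (hFjnn j₀ j)
          calc ∑ j ∈ Finset.range K, Fj j₀ (k - (k - j)) * H (k - j)
              ≤ ∑ j ∈ Finset.range K, Fj j₀ j * ((1 + δ) * (a * F k)) :=
                Finset.sum_le_sum hterm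
            _ = (∑ j ∈ Finset.range K, Fj j₀ j) * ((1 + δ) * (a * F k)) :=
                (Finset.sum_mul _ _ _).symm
            _ ≤ 1 * ((1 + δ) * (a * F k)) := by
                apply mul_le_mul_of_nonneg_right (hFj_sum_le j₀ _)
                have : (0:ℝ) ≤ a * F k := mul_nonneg ha0.le (hFnn k)
                nlinarith
            _ = (1 + δ) * (a * F k) := one_mul _
        -- combine the three parts
        have hscalar : (K : ℝ) * (d * ((1 + δ) * F k)) + d * a * (5 * δ * F k)
            + (1 + δ) * (a * F k) ≤ a * (1 + ε) * F k := by
          have hFk := (hkstar k (by omega)).le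
          have h1 : (K : ℝ) * (d * (1 + δ)) ≤ a * (ε / 2) := by
            have : 2 * (K:ℝ) * d * (1 + δ) ≤ a * ε := by
              calc 2 * (K:ℝ) * d * (1 + δ) ≤ A * ε := hAK
                _ ≤ a * ε := mul_le_mul_of_nonneg_right haA hε.le
            linarith
          have h2 : a * ((5 * d + 1) * δ) ≤ a * (ε / 2) :=
            mul_le_mul_of_nonneg_left hδε ha0.le
          have hsc : (K : ℝ) * (d * (1 + δ)) + d * a * (5 * δ)
              + (1 + δ) * a ≤ a * (1 + ε) := by nlinarith
          calc (K : ℝ) * (d * ((1 + δ) * F k)) + d * a * (5 * δ * F k)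
              + (1 + δ) * (a * F k)
              = ((K : ℝ) * (d * (1 + δ)) + d * a * (5 * δ) + (1 + δ) * a) * F k := by ring
            _ ≤ (a * (1 + ε)) * F k := mul_le_mul_of_nonneg_right hsc hFk
            _ = a * (1 + ε) * F k := rfl
        rw [hgoal_eq, hexp, ← hsplit1, ← hsplit2]
        linarith
  -- conclusion
  refine ⟨A, hA0, ?_⟩
  intro n _ k hk
  have hkk : kstar ≤ k := by rw [hkstar_def]; exact Nat.find_min' hex hk
  set L := (List.finRange m).flatMap fun j => List.replicate (n j) (Fj j) with hL_def
  have hmem : ∀ g ∈ L, ∃ j, g = Fj j := by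
    intro g hg
    rw [hL_def, List.mem_flatMap] at hg
    obtain ⟨j, -, hg⟩ := hg
    exact ⟨j, List.eq_of_mem_replicate hg⟩
  have hlen : L.length = ∑ j, n j := by
    rw [hL_def, List.length_flatMap, Fin.sum_univ_def]
    congr 1
    apply List.map_congr_left
    intro j _
    simp
  have h := key L hmem k hkk
  rwa [hlen] at h
end

section
/- Let {P(k); k∈ℤ₊} and {Q(k); k∈ℤ₊} be nonnegative d₀×d₁ and d₁×d₂ matrix sequences with finite sums P = Σ_k P(k) and Q = Σ_k Q(k). Suppose there is a ℤ₊-valued random variable U that is locally subexponential with span one such that P(k)/P(U=k) → P̃ ≥ O and Q(k)/P(U=k) → Q̃ ≥ O elementwise as k → ∞. Then the convolution satisfies lim_{k→∞} (P*Q)(k)/P(U=k) = P̃ Q + P Q̃, where (P*Q)(k) = Σ_{l=0}^{k} P(k−l)Q(l). -/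
open Filter Topology

/-- Convolution of two matrix sequences. -/
noncomputable def mconv {d0 d1 d2 : ℕ} (P : ℕ → Matrix (Fin d0) (Fin d1) ℝ)
    (Q : ℕ → Matrix (Fin d1) (Fin d2) ℝ) (k : ℕ) : Matrix (Fin d0) (Fin d2) ℝ :=
  ∑ l ∈ Finset.range (k + 1), P (k - l) * Q l

lemma ratio_add (q : ℕ → ℝ) (hpos : ∀ᶠ k in atTop, 0 < q k)
    (h1 : Tendsto (fun k => q (k + 1) / q k) atTop (nhds 1)) (l : ℕ) :
    Tendsto (fun k => q (k + l) / q k) atTop (nhds 1) := by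
  induction l with
  | zero =>
    exact Tendsto.congr' (hpos.mono fun k hk => (div_self hk.ne').symm) tendsto_const_nhds
  | succ l ih =>
    have h2 : Tendsto (fun k => q (k + l + 1) / q (k + l)) atTop (nhds 1) :=
      h1.comp (tendsto_add_atTop_nat l)
    have h3 := h2.mul ih
    rw [mul_one] at h3
    refine h3.congr' ?_
    have hp : ∀ᶠ k in atTop, 0 < q (k + l) := (tendsto_add_atTop_nat l).eventually hpos
    filter_upwards [hp] with k hk
    have hne : q (k + l) ≠ 0 := hk.ne'
    field_simp
    ring

lemma ratio_sub (q : ℕ → ℝ) (hpos : ∀ᶠ k in atTop, 0 < q k)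
    (h1 : Tendsto (fun k => q (k + 1) / q k) atTop (nhds 1)) (l : ℕ) :
    Tendsto (fun k => q (k - l) / q k) atTop (nhds 1) := by
  have hinv : Tendsto (fun k => q k / q (k + l)) atTop (nhds 1) := by
    have := (ratio_add q hpos h1 l).inv₀ one_ne_zero
    rw [inv_one] at this
    refine this.congr (fun k => ?_)
    simp [inv_div]
  have := hinv.comp (tendsto_sub_atTop_nat l)
  refine this.congr' ?_
  filter_upwards [eventually_ge_atTop l] with k hk
  simp only [Function.comp_apply]
  rw [Nat.sub_add_cancel hk]

lemma head_tendsto (f g q : ℕ → ℝ) (hpos : ∀ᶠ k in atTop, 0 < q k)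
    (h1 : Tendsto (fun k => q (k + 1) / q k) atTop (nhds 1)) (a : ℝ)
    (ha : Tendsto (fun k => f k / q k) atTop (nhds a)) (K : ℕ) :
    Tendsto (fun k => (∑ l ∈ Finset.range (K + 1), f (k - l) * g l) / q k) atTop
      (nhds (a * ∑ l ∈ Finset.range (K + 1), g l)) := by
  have hterm : ∀ l : ℕ, Tendsto (fun k => f (k - l) * g l / q k) atTop (nhds (a * g l)) := by
    intro l
    have h1' : Tendsto (fun k => f (k - l) / q (k - l)) atTop (nhds a) :=
      ha.comp (tendsto_sub_atTop_nat l)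
    have h2 := ratio_sub q hpos h1 l
    have h3 := (h1'.mul h2).mul (tendsto_const_nhds (x := g l))
    rw [mul_one] at h3
    refine h3.congr' ?_
    obtain ⟨n₀, hn₀⟩ := eventually_atTop.1 hpos
    filter_upwards [eventually_ge_atTop (n₀ + l)] with k hk
    have hne : q (k - l) ≠ 0 := (hn₀ (k - l) (by omega)).ne'
    field_simp
  have h := tendsto_finset_sum (Finset.range (K + 1)) (fun l _ => hterm l)
  rw [Finset.mul_sum]
  refine h.congr (fun k => ?_)
  rw [Finset.sum_div]

lemma tail_tendsto (f g q : ℕ → ℝ) (hpos : ∀ᶠ k in atTop, 0 < q k)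
    (h1 : Tendsto (fun k => q (k + 1) / q k) atTop (nhds 1)) (b : ℝ)
    (hb : Tendsto (fun k => g k / q k) atTop (nhds b)) (K : ℕ) :
    Tendsto (fun k => (∑ m ∈ Finset.range (K + 1), f m * g (k - m)) / q k) atTop
      (nhds ((∑ m ∈ Finset.range (K + 1), f m) * b)) := by
  have h := head_tendsto g f q hpos h1 b hb K
  have e : ∀ k, (∑ l ∈ Finset.range (K + 1), g (k - l) * f l)
      = ∑ m ∈ Finset.range (K + 1), f m * g (k - m) :=
    fun k => Finset.sum_congr rfl fun m _ => mul_comm _ _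
  simp only [e] at h
  rwa [mul_comm b] at h

lemma conv_decomp (f g : ℕ → ℝ) (K k : ℕ) (hk : 2 * K + 2 ≤ k) :
    conv f g k = (∑ l ∈ Finset.range (K + 1), f (k - l) * g l)
      + (∑ l ∈ Finset.Ico (K + 1) (k - K), f (k - l) * g l)
      + (∑ m ∈ Finset.range (K + 1), f m * g (k - m)) := by
  have h3 : ∑ l ∈ Finset.Ico (k - K) (k + 1), f (k - l) * g l
      = ∑ m ∈ Finset.range (K + 1), f m * g (k - m) := by
    refine Finset.sum_nbij' (fun l => k - l) (fun m => k - m) ?_ ?_ ?_ ?_ ?_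
    · intro l hl
      simp only [Finset.mem_Ico] at hl
      simp only [Finset.mem_range]
      omega
    · intro m hm
      simp only [Finset.mem_range] at hm
      simp only [Finset.mem_Ico]
      omega
    · intro l hl
      simp only [Finset.mem_Ico] at hl
      omega
    · intro m hm
      simp only [Finset.mem_range] at hm
      omega
    · intro l hl
      simp only [Finset.mem_Ico] at hl
      congr 2
      omega
  rw [← h3]
  unfold conv
  rw [Finset.range_eq_Ico, ← Finset.sum_Ico_consecutive (fun l => f (k - l) * g l)
      (Nat.zero_le (K + 1)) (by omega : K + 1 ≤ k + 1),
    ← Finset.sum_Ico_consecutive (fun l => f (k - l) * g l)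
      (by omega : K + 1 ≤ k - K) (by omega : k - K ≤ k + 1),
    ← Finset.range_eq_Ico, add_assoc]

lemma middle_le (f g q : ℕ → ℝ) (hf : ∀ k, 0 ≤ f k) (hg : ∀ k, 0 ≤ g k) (C : ℝ) (n₀ : ℕ)
    (hfC : ∀ k, n₀ ≤ k → f k ≤ C * q k) (hgC : ∀ k, n₀ ≤ k → g k ≤ C * q k)
    (K k : ℕ) (hK : n₀ ≤ K) :
    ∑ l ∈ Finset.Ico (K + 1) (k - K), f (k - l) * g l ≤
      C ^ 2 * ∑ l ∈ Finset.Ico (K + 1) (k - K), q (k - l) * q l := by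
  rw [Finset.mul_sum]
  refine Finset.sum_le_sum (fun l hl => ?_)
  simp only [Finset.mem_Ico] at hl
  have h1 : f (k - l) ≤ C * q (k - l) := hfC _ (by omega)
  have h2 : g l ≤ C * q l := hgC _ (by omega)
  have h3 : 0 ≤ C * q (k - l) := le_trans (hf _) h1
  calc f (k - l) * g l ≤ (C * q (k - l)) * (C * q l) :=
        mul_le_mul h1 h2 (hg l) h3
    _ = C ^ 2 * (q (k - l) * q l) := by ring

lemma self_div_tendsto (q : ℕ → ℝ) (hpos : ∀ᶠ k in atTop, 0 < q k) :
    Tendsto (fun k => q k / q k) atTop (nhds 1) :=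
  Tendsto.congr' (hpos.mono fun k hk => (div_self hk.ne').symm) tendsto_const_nhds

lemma middleq_tendsto (q : ℕ → ℝ) (hpos : ∀ᶠ k in atTop, 0 < q k)
    (h1 : Tendsto (fun k => q (k + 1) / q k) atTop (nhds 1))
    (h2 : Tendsto (fun k => conv q q k / q k) atTop (nhds 2)) (K : ℕ) :
    Tendsto (fun k => (∑ l ∈ Finset.Ico (K + 1) (k - K), q (k - l) * q l) / q k) atTop
      (nhds (2 - 2 * ∑ l ∈ Finset.range (K + 1), q l)) := by
  have hhead := head_tendsto q q q hpos h1 1 (self_div_tendsto q hpos) K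
  have htail := tail_tendsto q q q hpos h1 1 (self_div_tendsto q hpos) K
  have h := (h2.sub hhead).sub htail
  have hlim : (2 : ℝ) - 1 * (∑ l ∈ Finset.range (K + 1), q l)
      - (∑ l ∈ Finset.range (K + 1), q l) * 1
      = 2 - 2 * ∑ l ∈ Finset.range (K + 1), q l := by ring
  rw [hlim] at h
  refine h.congr' ?_
  filter_upwards [eventually_ge_atTop (2 * K + 2), hpos] with k hk hkpos
  have hd := conv_decomp q q K k hk
  field_simp
  linarith [hd]

lemma scalar_conv (f g q : ℕ → ℝ) (hf : ∀ k, 0 ≤ f k) (hg : ∀ k, 0 ≤ g k)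
    (hfs : Summable f) (hgs : Summable g)
    (hpos : ∀ᶠ k in atTop, 0 < q k)
    (h1 : Tendsto (fun k => q (k + 1) / q k) atTop (nhds 1))
    (h2 : Tendsto (fun k => conv q q k / q k) atTop (nhds 2))
    (hqsum : HasSum q 1) (a b : ℝ)
    (ha : Tendsto (fun k => f k / q k) atTop (nhds a))
    (hb : Tendsto (fun k => g k / q k) atTop (nhds b)) :
    Tendsto (fun k => conv f g k / q k) atTop
      (nhds (a * (∑' k, g k) + (∑' k, f k) * b)) := by
  set C : ℝ := max (|a| + 1) (|b| + 1) with hC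
  have hC1 : (1 : ℝ) ≤ C := le_trans (by linarith [abs_nonneg a]) (le_max_left _ _)
  have hC0 : (0 : ℝ) < C := lt_of_lt_of_le one_pos hC1
  have hCsq : (0 : ℝ) < C ^ 2 := by positivity
  -- eventual domination
  have hfa : ∀ᶠ k in atTop, f k ≤ C * q k := by
    have hlt : ∀ᶠ k in atTop, f k / q k < C :=
      ha.eventually_lt_const (lt_of_le_of_lt (le_abs_self a)
        (lt_of_lt_of_le (lt_add_one _) (le_max_left _ _)))
    filter_upwards [hlt, hpos] with k hk hkp
    exact le_of_lt ((div_lt_iff₀ hkp).1 hk)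
  have hgb : ∀ᶠ k in atTop, g k ≤ C * q k := by
    have hlt : ∀ᶠ k in atTop, g k / q k < C :=
      hb.eventually_lt_const (lt_of_le_of_lt (le_abs_self b)
        (lt_of_lt_of_le (lt_add_one _) (le_max_right _ _)))
    filter_upwards [hlt, hpos] with k hk hkp
    exact le_of_lt ((div_lt_iff₀ hkp).1 hk)
  obtain ⟨n₁, hn₁⟩ := eventually_atTop.1 (hfa.and (hgb.and hpos))
  rw [Metric.tendsto_atTop]
  intro ε hε
  set G := ∑' k, g k with hG
  set F := ∑' k, f k with hF
  -- choose K
  have hGK : Tendsto (fun K => a * ∑ l ∈ Finset.range (K + 1), g l) atTop (nhds (a * G)) :=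
    (tendsto_const_nhds.mul (hgs.hasSum.tendsto_sum_nat.comp (tendsto_add_atTop_nat 1)))
  have hFK : Tendsto (fun K => (∑ l ∈ Finset.range (K + 1), f l) * b) atTop (nhds (F * b)) :=
    ((hfs.hasSum.tendsto_sum_nat.comp (tendsto_add_atTop_nat 1)).mul tendsto_const_nhds)
  have hδ : Tendsto (fun K => 2 - 2 * ∑ l ∈ Finset.range (K + 1), q l) atTop (nhds 0) := by
    have := (tendsto_const_nhds (x := (2:ℝ))).sub
      ((tendsto_const_nhds (x := (2:ℝ))).mul (hqsum.tendsto_sum_nat.comp (tendsto_add_atTop_nat 1)))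
    simpa using this
  have hev1 : ∀ᶠ K in atTop, |a * (∑ l ∈ Finset.range (K + 1), g l) - a * G| < ε / 8 := by
    have := hGK
    rw [Metric.tendsto_atTop] at this
    obtain ⟨N, hN⟩ := this (ε / 8) (by linarith)
    exact eventually_atTop.2 ⟨N, fun K hK => by simpa [Real.dist_eq] using hN K hK⟩
  have hev2 : ∀ᶠ K in atTop, |(∑ l ∈ Finset.range (K + 1), f l) * b - F * b| < ε / 8 := by
    have := hFK
    rw [Metric.tendsto_atTop] at this
    obtain ⟨N, hN⟩ := this (ε / 8) (by linarith)
    exact eventually_atTop.2 ⟨N, fun K hK => by simpa [Real.dist_eq] using hN K hK⟩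
  have hev3 : ∀ᶠ K in atTop,
      |2 - 2 * ∑ l ∈ Finset.range (K + 1), q l| < ε / (8 * C ^ 2) := by
    have := hδ
    rw [Metric.tendsto_atTop] at this
    obtain ⟨N, hN⟩ := this (ε / (8 * C ^ 2)) (by positivity)
    exact eventually_atTop.2 ⟨N, fun K hK => by simpa [Real.dist_eq] using hN K hK⟩
  obtain ⟨K, hK1, hK2, hK3, hKn₁⟩ :
      ∃ K, |a * (∑ l ∈ Finset.range (K + 1), g l) - a * G| < ε / 8 ∧
        |(∑ l ∈ Finset.range (K + 1), f l) * b - F * b| < ε / 8 ∧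
        |2 - 2 * ∑ l ∈ Finset.range (K + 1), q l| < ε / (8 * C ^ 2) ∧ n₁ ≤ K := by
    obtain ⟨K, h⟩ := ((hev1.and (hev2.and (hev3.and (eventually_ge_atTop n₁))))).exists
    exact ⟨K, h.1, h.2.1, h.2.2.1, h.2.2.2⟩
  set GK := ∑ l ∈ Finset.range (K + 1), g l
  set FK := ∑ l ∈ Finset.range (K + 1), f l
  set δK := 2 - 2 * ∑ l ∈ Finset.range (K + 1), q l with hδK
  -- eventual facts in k
  have hhead := head_tendsto f g q hpos h1 a ha K
  have htail := tail_tendsto f g q hpos h1 b hb K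
  have hmidq := middleq_tendsto q hpos h1 h2 K
  rw [Metric.tendsto_atTop] at hhead htail hmidq
  obtain ⟨N1, hN1⟩ := hhead (ε / 4) (by linarith)
  obtain ⟨N2, hN2⟩ := htail (ε / 4) (by linarith)
  obtain ⟨N3, hN3⟩ := hmidq (ε / (8 * C ^ 2)) (by positivity)
  refine ⟨max (max N1 N2) (max N3 (max (2 * K + 2) n₁)), fun k hk => ?_⟩
  simp only [ge_iff_le, max_le_iff] at hk
  obtain ⟨⟨hkN1, hkN2⟩, hkN3, hk2K, hkn₁⟩ := hk
  have hqk : 0 < q k := (hn₁ k hkn₁).2.2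
  -- decomposition
  have hd := conv_decomp f g K k hk2K
  set A := ∑ l ∈ Finset.range (K + 1), f (k - l) * g l with hA
  set M := ∑ l ∈ Finset.Ico (K + 1) (k - K), f (k - l) * g l with hM
  set B := ∑ m ∈ Finset.range (K + 1), f m * g (k - m) with hB
  set Mq := ∑ l ∈ Finset.Ico (K + 1) (k - K), q (k - l) * q l with hMq
  have hsplit : conv f g k / q k = A / q k + M / q k + B / q k := by
    rw [hd]; ring
  -- middle bounds
  have hMnn : 0 ≤ M := Finset.sum_nonneg fun l _ => mul_nonneg (hf _) (hg _)
  have hMle : M ≤ C ^ 2 * Mq :=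
    middle_le f g q hf hg C n₁ (fun m hm => (hn₁ m hm).1) (fun m hm => (hn₁ m hm).2.1)
      K k hKn₁
  have hMqbound : |Mq / q k - δK| < ε / (8 * C ^ 2) := by
    have := hN3 k hkN3
    rwa [Real.dist_eq] at this
  have hMdiv : M / q k ≤ C ^ 2 * (Mq / q k) := by
    rw [← mul_div_assoc]
    gcongr
  have hδKle : δK ≤ |δK| := le_abs_self _
  have hMfinal : M / q k < ε / 4 := by
    have h5 : Mq / q k < δK + ε / (8 * C ^ 2) := by
      have := abs_lt.1 hMqbound
      linarith [this.2]
    have h6 : C ^ 2 * (Mq / q k) < C ^ 2 * (δK + ε / (8 * C ^ 2)) :=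
      (mul_lt_mul_iff_right₀ hCsq).2 h5
    have h7 : C ^ 2 * (ε / (8 * C ^ 2)) = ε / 8 := by field_simp
    have h8 : C ^ 2 * δK ≤ C ^ 2 * |δK| := (mul_le_mul_iff_right₀ hCsq).2 hδKle
    have h9 : C ^ 2 * |δK| < C ^ 2 * (ε / (8 * C ^ 2)) := (mul_lt_mul_iff_right₀ hCsq).2 hK3
    have h10 : C ^ 2 * δK < C ^ 2 * (ε / (8 * C ^ 2)) := lt_of_le_of_lt h8 h9
    rw [h7] at h10
    calc M / q k ≤ C ^ 2 * (Mq / q k) := hMdiv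
      _ < C ^ 2 * δK + C ^ 2 * (ε / (8 * C ^ 2)) := by rw [mul_add] at h6; exact h6
      _ < ε / 8 + ε / 8 := by rw [h7]; exact add_lt_add_left h10 _
      _ = ε / 4 := by ring
  have hAdev : |A / q k - a * GK| < ε / 4 := by
    have := hN1 k hkN1; rwa [Real.dist_eq] at this
  have hBdev : |B / q k - FK * b| < ε / 4 := by
    have := hN2 k hkN2; rwa [Real.dist_eq] at this
  rw [Real.dist_eq, hsplit]
  have key : A / q k + M / q k + B / q k - (a * G + F * b)
      = (A / q k - a * GK) + (M / q k) + (B / q k - FK * b)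
        + (a * GK - a * G) + (FK * b - F * b) := by ring
  rw [key]
  have habs : |(A / q k - a * GK) + (M / q k) + (B / q k - FK * b)
        + (a * GK - a * G) + (FK * b - F * b)|
      ≤ |A / q k - a * GK| + |M / q k| + |B / q k - FK * b|
        + |a * GK - a * G| + |FK * b - F * b| := by
    calc _ ≤ |(A / q k - a * GK) + (M / q k) + (B / q k - FK * b) + (a * GK - a * G)|
          + |FK * b - F * b| := abs_add_le _ _
      _ ≤ |(A / q k - a * GK) + (M / q k) + (B / q k - FK * b)| + |a * GK - a * G|
          + |FK * b - F * b| := by gcongr; exact abs_add_le _ _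
      _ ≤ |(A / q k - a * GK) + (M / q k)| + |B / q k - FK * b| + |a * GK - a * G|
          + |FK * b - F * b| := by gcongr; exact abs_add_le _ _
      _ ≤ _ := by gcongr; exact abs_add_le _ _
  have hMabs : |M / q k| = M / q k := abs_of_nonneg (div_nonneg hMnn hqk.le)
  rw [hMabs] at habs
  calc _ ≤ _ := habs
    _ < ε := by linarith

/-- Convolution asymptotics for matrix sequences whose entries are asymptotically
proportional to a locally subexponential pmf (Proposition A.7 of the paper). -/
theorem stmt5 (d0 d1 d2 : ℕ)
    (P : ℕ → Matrix (Fin d0) (Fin d1) ℝ) (Q : ℕ → Matrix (Fin d1) (Fin d2) ℝ)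
    (hPnn : ∀ k i j, 0 ≤ P k i j) (hQnn : ∀ k i j, 0 ≤ Q k i j)
    (hPsum : ∀ i j, Summable fun k => P k i j)
    (hQsum : ∀ i j, Summable fun k => Q k i j)
    (pU : ℕ → ℝ) (hUnn : ∀ k, 0 ≤ pU k) (hUsum : HasSum pU 1) (hU : SLocOne pU)
    (Pt : Matrix (Fin d0) (Fin d1) ℝ) (Qt : Matrix (Fin d1) (Fin d2) ℝ)
    (hPtnn : ∀ i j, 0 ≤ Pt i j) (hQtnn : ∀ i j, 0 ≤ Qt i j)
    (hPl : ∀ i j, Tendsto (fun k => P k i j / pU k) atTop (nhds (Pt i j)))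
    (hQl : ∀ i j, Tendsto (fun k => Q k i j / pU k) atTop (nhds (Qt i j))) :
    ∀ i j, Tendsto (fun k => mconv P Q k i j / pU k) atTop
      (nhds ((Pt * (Matrix.of fun i j => ∑' k, Q k i j)
        + (Matrix.of fun i j => ∑' k, P k i j) * Qt) i j)) := by
  intro i j
  obtain ⟨hpos, h1, h2⟩ := hU
  have hentry : ∀ k, mconv P Q k i j
      = ∑ m : Fin d1, conv (fun k => P k i m) (fun k => Q k m j) k := by
    intro k
    unfold mconv conv
    rw [show (∑ l ∈ Finset.range (k + 1), P (k - l) * Q l) i j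
        = ∑ l ∈ Finset.range (k + 1), ∑ m : Fin d1, P (k - l) i m * Q l m j from by
      simp [Matrix.sum_apply, Matrix.mul_apply]]
    exact Finset.sum_comm
  have htarget : (Pt * (Matrix.of fun i j => ∑' k, Q k i j)
        + (Matrix.of fun i j => ∑' k, P k i j) * Qt) i j
      = ∑ m : Fin d1, (Pt i m * (∑' k, Q k m j) + (∑' k, P k i m) * Qt m j) := by
    simp [Matrix.add_apply, Matrix.mul_apply, Finset.sum_add_distrib]
  rw [htarget]
  have hterms : ∀ m : Fin d1,
      Tendsto (fun k => conv (fun k => P k i m) (fun k => Q k m j) k / pU k) atTop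
        (nhds (Pt i m * (∑' k, Q k m j) + (∑' k, P k i m) * Qt m j)) := by
    intro m
    exact scalar_conv _ _ pU (fun k => hPnn k i m) (fun k => hQnn k m j)
      (hPsum i m) (hQsum m j) hpos h1 h2 hUsum _ _ (hPl i m) (hQl m j)
  have h := tendsto_finset_sum Finset.univ (fun m _ => hterms m)
  refine h.congr fun k => ?_
  rw [hentry k, Finset.sum_div]
end

section
/- Let Φ(0) and G be finite nonnegative square matrices of the same size with sp(Φ(0)) < 1 and sp(G) < 1, and suppose (I − Φ(0))(I − G) = I − S where S = Σ_{l≥0} Φ(−l) is a nonnegative matrix with Se ≤ e. Then sp(S) < 1. -/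
open Filter Topology
open scoped ENNReal Matrix

attribute [local instance] Matrix.linftyOpNormedRing Matrix.linftyOpNormedAlgebra

/-- If all complex eigenvalues of a real matrix have modulus `< 1`, its powers tend to `0`
in (linfty-op) norm. -/
lemma stmt8_pow_tendsto {M : ℕ} [Nonempty (Fin M)] (A : Matrix (Fin M) (Fin M) ℝ)
    (hsp : ∀ μ ∈ spectrum ℂ (A.map Complex.ofReal), ‖μ‖ < 1) :
    Tendsto (fun n : ℕ => ‖A ^ n‖) atTop (𝓝 0) := by
  classical
  set Ac : Matrix (Fin M) (Fin M) ℂ := A.map Complex.ofReal with hAc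
  have i0 : Fin M := Classical.arbitrary _
  have hnt : Nontrivial (Matrix (Fin M) (Fin M) ℂ) := by
    refine nontrivial_of_ne 1 0 fun h => ?_
    have := congrFun (congrFun h i0) i0
    simp [Matrix.one_apply] at this
  have hrad : spectralRadius ℂ Ac < 1 := by
    have h := spectrum.spectralRadius_lt_of_forall_lt (a := Ac) (r := 1) ?_
    · simpa using h
    · intro z hz
      have := hsp z hz
      rwa [← coe_nnnorm, NNReal.coe_lt_one] at this
  obtain ⟨c, hc1, hc2⟩ := exists_between hrad
  have hgel := spectrum.pow_nnnorm_pow_one_div_tendsto_nhds_spectralRadius Ac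
  have hev : ∀ᶠ n : ℕ in atTop, ((‖Ac ^ n‖₊ : ℝ≥0∞)) ^ (1 / (n : ℝ)) < c :=
    hgel.eventually_lt_const hc1
  have hev2 : ∀ᶠ n : ℕ in atTop, (‖Ac ^ n‖₊ : ℝ≥0∞) ≤ c ^ n := by
    filter_upwards [hev, eventually_ge_atTop 1] with n hn hn1
    have hn0 : (n : ℝ) ≠ 0 := by positivity
    have h1 : (((‖Ac ^ n‖₊ : ℝ≥0∞)) ^ (1 / (n : ℝ))) ^ (n : ℝ) ≤ c ^ (n : ℝ) :=
      ENNReal.rpow_le_rpow hn.le (by positivity)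
    rw [← ENNReal.rpow_mul, one_div, inv_mul_cancel₀ hn0, ENNReal.rpow_one,
      ENNReal.rpow_natCast] at h1
    exact h1
  have hc2' : Tendsto (fun n : ℕ => c ^ n) atTop (𝓝 0) :=
    ENNReal.tendsto_pow_atTop_nhds_zero_of_lt_one hc2
  have hnorm : Tendsto (fun n : ℕ => (‖Ac ^ n‖₊ : ℝ≥0∞)) atTop (𝓝 0) := by
    refine tendsto_of_tendsto_of_tendsto_of_le_of_le' tendsto_const_nhds hc2' ?_ hev2
    exact Eventually.of_forall fun n => zero_le
  -- relate ‖Ac ^ n‖ to ‖A ^ n‖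
  have hmap : ∀ n : ℕ, Ac ^ n = (A ^ n).map Complex.ofReal := by
    intro n
    have : Ac = Complex.ofRealHom.mapMatrix A := rfl
    rw [this, ← map_pow]
    rfl
  have hEq : ∀ n : ℕ, ‖Ac ^ n‖₊ = ‖A ^ n‖₊ := by
    intro n
    rw [hmap n, Matrix.linfty_opNNNorm_def, Matrix.linfty_opNNNorm_def]
    congr 1
    ext i
    congr 1
    ext j
    simp [Matrix.map_apply]
  have : Tendsto (fun n : ℕ => (‖A ^ n‖₊ : ℝ≥0∞)) atTop (𝓝 0) := by
    simpa only [hEq] using hnorm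
  have h2 : Tendsto (fun n : ℕ => ‖A ^ n‖₊) atTop (𝓝 0) := by
    rw [← ENNReal.coe_zero] at this
    exact_mod_cast ENNReal.tendsto_coe.mp this
  have := NNReal.tendsto_coe.mpr h2
  simpa using this

/-- Key comparison lemma: if `u ≤ A u` entrywise with `A` nonnegative and all complex
eigenvalues of `A` of modulus `< 1`, then `u ≤ 0`. -/
lemma stmt8_key {M : ℕ} (A : Matrix (Fin M) (Fin M) ℝ) (hA : ∀ i j, 0 ≤ A i j)
    (hsp : ∀ μ ∈ spectrum ℂ (A.map Complex.ofReal), ‖μ‖ < 1)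
    (u : Fin M → ℝ) (hu : ∀ i, u i ≤ (A *ᵥ u) i) : ∀ i, u i ≤ 0 := by
  classical
  intro i
  have : Nonempty (Fin M) := ⟨i⟩
  have hmono : ∀ (x y : Fin M → ℝ), (∀ j, x j ≤ y j) → ∀ j, (A *ᵥ x) j ≤ (A *ᵥ y) j := by
    intro x y h j
    simp only [Matrix.mulVec, dotProduct]
    exact Finset.sum_le_sum fun k _ => mul_le_mul_of_nonneg_left (h k) (hA j k)
  have hpow : ∀ n : ℕ, ∀ j, u j ≤ ((A ^ n) *ᵥ u) j := by
    intro n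
    induction n with
    | zero => intro j; simp
    | succ n ih =>
      intro j
      have h1 : u j ≤ (A *ᵥ u) j := hu j
      have h2 : (A *ᵥ u) j ≤ (A *ᵥ ((A ^ n) *ᵥ u)) j := hmono _ _ ih j
      have h3 : A *ᵥ ((A ^ n) *ᵥ u) = (A ^ (n + 1)) *ᵥ u := by
        rw [Matrix.mulVec_mulVec, ← pow_succ']
      calc u j ≤ (A *ᵥ u) j := h1
        _ ≤ (A *ᵥ ((A ^ n) *ᵥ u)) j := h2
        _ = ((A ^ (n + 1)) *ᵥ u) j := by rw [h3]
  have hten : Tendsto (fun n : ℕ => ((A ^ n) *ᵥ u) i) atTop (𝓝 0) := by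
    have hnorm := stmt8_pow_tendsto A hsp
    refine squeeze_zero_norm (fun n => ?_) (by simpa using hnorm.mul_const ‖u‖)
    calc ‖((A ^ n) *ᵥ u) i‖ ≤ ‖(A ^ n) *ᵥ u‖ := norm_le_pi_norm _ i
      _ ≤ ‖A ^ n‖ * ‖u‖ := Matrix.linfty_opNorm_mulVec _ _
  exact ge_of_tendsto hten (Eventually.of_forall fun n => hpow n i)

/-- If `(I − Φ₀)(I − G) = I − S` with `sp(Φ₀) < 1`, `sp(G) < 1`, and `S` nonnegative
substochastic, then `sp(S) < 1`. Spectral radius strictly below one is rendered as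
"every complex eigenvalue has modulus `< 1`". -/
theorem stmt8 (M : ℕ) (Φ₀ G S : Matrix (Fin M) (Fin M) ℝ)
    (hΦnn : ∀ i j, 0 ≤ Φ₀ i j) (hGnn : ∀ i j, 0 ≤ G i j)
    (hspΦ : ∀ μ ∈ spectrum ℂ (Φ₀.map (Complex.ofReal)), ‖μ‖ < 1)
    (hspG : ∀ μ ∈ spectrum ℂ (G.map (Complex.ofReal)), ‖μ‖ < 1)
    (hfact : ((1 : Matrix (Fin M) (Fin M) ℝ) - Φ₀) * (1 - G) = 1 - S)
    (hSnn : ∀ i j, 0 ≤ S i j) (hSsub : ∀ i, ∑ j, S i j ≤ 1) :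
    ∀ μ ∈ spectrum ℂ (S.map (Complex.ofReal)), ‖μ‖ < 1 := by
  classical
  intro μ hμ
  by_contra hlt
  push_neg at hlt
  -- obtain an eigenvector
  set Sc : Matrix (Fin M) (Fin M) ℂ := S.map Complex.ofReal with hSc
  have hμ' : μ ∈ spectrum ℂ (Matrix.toLinAlgEquiv' Sc) := by
    rwa [AlgEquiv.spectrum_eq]
  have heig : Module.End.HasEigenvalue (Matrix.toLinAlgEquiv' Sc : (Fin M → ℂ) →ₗ[ℂ] (Fin M → ℂ)) μ :=
    Module.End.HasEigenvalue.of_mem_spectrum hμ'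
  obtain ⟨v, hv⟩ := heig.exists_hasEigenvector
  have hvne : v ≠ 0 := hv.right
  have hveq : Sc *ᵥ v = μ • v := by
    have := hv.apply_eq_smul
    rwa [Matrix.toLinAlgEquiv'_apply] at this
  set w : Fin M → ℝ := fun j => ‖v j‖ with hw
  have hwnn : ∀ j, 0 ≤ w j := fun j => norm_nonneg _
  -- w ≤ S w entrywise
  have hSw : ∀ i, w i ≤ (S *ᵥ w) i := by
    intro i
    have h1 : ‖(Sc *ᵥ v) i‖ = ‖μ‖ * ‖v i‖ := by
      rw [hveq]; simp [norm_smul]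
    have h2 : ‖(Sc *ᵥ v) i‖ ≤ (S *ᵥ w) i := by
      rw [Matrix.mulVec, dotProduct]
      refine (norm_sum_le _ _).trans ?_
      rw [Matrix.mulVec, dotProduct]
      refine Finset.sum_le_sum fun j _ => ?_
      rw [norm_mul]
      simp only [hSc, Matrix.map_apply, Complex.norm_real]
      rw [Real.norm_of_nonneg (hSnn i j)]
    calc w i = 1 * ‖v i‖ := (one_mul _).symm
      _ ≤ ‖μ‖ * ‖v i‖ := by
        exact mul_le_mul_of_nonneg_right hlt (norm_nonneg _)
      _ = ‖(Sc *ᵥ v) i‖ := h1.symm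
      _ ≤ (S *ᵥ w) i := h2
  -- chain through the factorization
  set u : Fin M → ℝ := (1 - G) *ᵥ w with hu
  have hΦu : ∀ i, u i ≤ (Φ₀ *ᵥ u) i := by
    intro i
    have h1 : (1 - Φ₀) *ᵥ u = (1 - S) *ᵥ w := by
      rw [hu, Matrix.mulVec_mulVec, hfact]
    have h2 : ((1 - Φ₀) *ᵥ u) i ≤ 0 := by
      rw [h1, Matrix.sub_mulVec]
      simpa using sub_nonpos.mpr (hSw i)
    have h3 : ((1 - Φ₀) *ᵥ u) i = u i - (Φ₀ *ᵥ u) i := by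
      rw [Matrix.sub_mulVec]; simp
    linarith [h2, h3.symm.le]
  have hule : ∀ i, u i ≤ 0 := stmt8_key Φ₀ hΦnn hspΦ u hΦu
  have hGw : ∀ i, w i ≤ (G *ᵥ w) i := by
    intro i
    have : u i = w i - (G *ᵥ w) i := by
      rw [hu, Matrix.sub_mulVec]; simp
    linarith [hule i, this.symm.le]
  have hwle : ∀ i, w i ≤ 0 := stmt8_key G hGnn hspG w hGw
  -- contradiction with v ≠ 0
  obtain ⟨j, hj⟩ := Function.ne_iff.mp hvne
  have : 0 < w j := by simpa [hw] using norm_pos_iff.mpr (by simpa using hj)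
  linarith [hwle j, this]
end

section
/- Let α̅ : ℤ₊ → (0,∞) be a nonincreasing sequence with α̅(k) ~ λ^γ k^{−γ} as k → ∞, where λ > 0 and γ > 1, and let ρ = Σ_{l=0}^{∞} α̅(l) < ∞. Then lim_{k→∞} Σ_{l=0}^{k} α̅(l) α̅(k−l) / α̅(k) = 2ρ. -/
open Filter Topology

section auxlemmas
open Finset

private lemma auxratio (a : ℕ → ℝ) (lam γ : ℝ) (hlam : 0 < lam)
    (hpos : ∀ k, 0 < a k)
    (hasymp : Tendsto (fun k : ℕ => a k / (lam ^ γ * (k : ℝ) ^ (-γ))) atTop (nhds 1))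
    (s : ℕ → ℕ) (b : ℝ) (hb : 0 < b) (hs : Tendsto s atTop atTop)
    (hsb : Tendsto (fun k : ℕ => ((s k : ℝ)) / (k : ℝ)) atTop (𝓝 b)) :
    Tendsto (fun k => a (s k) / a k) atTop (𝓝 (b ^ (-γ))) := by
  set c := lam ^ γ with hcdef
  have hc : 0 < c := Real.rpow_pos_of_pos hlam γ
  set f : ℕ → ℝ := fun k => a k / (c * (k : ℝ) ^ (-γ)) with hfdef
  have hf : Tendsto f atTop (𝓝 1) := hasymp
  have hfs : Tendsto (fun k => f (s k)) atTop (𝓝 1) := hf.comp hs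
  have ha : ∀ n : ℕ, 1 ≤ n → a n = f n * (c * (n : ℝ) ^ (-γ)) := by
    intro n hn
    have hn' : (0 : ℝ) < (n : ℝ) := by exact_mod_cast hn
    have : c * (n : ℝ) ^ (-γ) ≠ 0 := by positivity
    simp only [hfdef]
    exact (div_mul_cancel₀ _ this).symm
  have hrp : Tendsto (fun k : ℕ => ((s k : ℝ) / (k : ℝ)) ^ (-γ)) atTop (𝓝 (b ^ (-γ))) :=
    (Real.continuousAt_rpow_const b (-γ) (Or.inl hb.ne')).tendsto.comp hsb
  have hmain : Tendsto (fun k : ℕ => (f (s k) / f k) * ((s k : ℝ) / (k : ℝ)) ^ (-γ))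
      atTop (𝓝 (b ^ (-γ))) := by
    have := ((hfs.div hf one_ne_zero).mul hrp)
    simpa using this
  apply hmain.congr'
  have h1 : ∀ᶠ k : ℕ in atTop, 1 ≤ k := eventually_ge_atTop 1
  have h2 : ∀ᶠ k : ℕ in atTop, 1 ≤ s k := hs.eventually (eventually_ge_atTop 1)
  filter_upwards [h1, h2] with k hk hsk
  have hk' : (0 : ℝ) < (k : ℝ) := by exact_mod_cast hk
  have hsk' : (0 : ℝ) < ((s k : ℕ) : ℝ) := by exact_mod_cast hsk
  have e1 : ((s k : ℝ) / (k : ℝ)) ^ (-γ) = (s k : ℝ) ^ (-γ) / (k : ℝ) ^ (-γ) :=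
    Real.div_rpow hsk'.le hk'.le _
  rw [e1, ha (s k) hsk, ha k hk]
  have n1 : f k ≠ 0 := by
    have : 0 < f k := div_pos (hpos k) (by positivity)
    exact this.ne'
  have n2 : ((k : ℝ)) ^ (-γ) ≠ 0 := by positivity
  have n3 : ((s k : ℝ)) ^ (-γ) ≠ 0 := by positivity
  field_simp

private lemma aux_cast_sub (j : ℕ) :
    Tendsto (fun k : ℕ => ((k - j : ℕ) : ℝ) / (k : ℝ)) atTop (𝓝 1) := by
  have h0 : Tendsto (fun k : ℕ => 1 - (j : ℝ) * (1 / (k : ℝ))) atTop (𝓝 1) := by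
    have := (tendsto_one_div_atTop_nhds_zero_nat.const_mul (j : ℝ))
    simpa using (tendsto_const_nhds.sub this)
  apply h0.congr'
  filter_upwards [eventually_ge_atTop (j + 1)] with k hk
  have hk0 : (0 : ℝ) < (k : ℝ) := by
    have : 0 < k := by omega
    exact_mod_cast this
  have hc : ((k - j : ℕ) : ℝ) = (k : ℝ) - (j : ℝ) := by
    have h : j ≤ k := by omega
    exact Nat.cast_sub h
  rw [hc]
  field_simp

private lemma aux_cast_half :
    Tendsto (fun k : ℕ => ((k / 2 : ℕ) : ℝ) / (k : ℝ)) atTop (𝓝 (1/2 : ℝ)) := by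
  have hlow : Tendsto (fun k : ℕ => 1/2 - 1 / (k : ℝ)) atTop (𝓝 (1/2 : ℝ)) := by
    simpa using ((tendsto_const_nhds (x := (1/2 : ℝ))).sub tendsto_one_div_atTop_nhds_zero_nat)
  have hhigh : Tendsto (fun _ : ℕ => (1/2 : ℝ)) atTop (𝓝 (1/2 : ℝ)) := tendsto_const_nhds
  apply tendsto_of_tendsto_of_tendsto_of_le_of_le' hlow hhigh
  · filter_upwards [eventually_ge_atTop 1] with k hk
    have hk0 : (0 : ℝ) < (k : ℝ) := by exact_mod_cast hk
    have hnat : (k : ℝ) ≤ 2 * ((k / 2 : ℕ) : ℝ) + 1 := by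
      exact_mod_cast (by omega : k ≤ 2 * (k / 2) + 1)
    rw [le_div_iff₀ hk0]
    have he : (1/2 - 1 / (k:ℝ)) * (k:ℝ) = (k:ℝ)/2 - 1 := by
      field_simp
    rw [he]; linarith
  · filter_upwards [eventually_ge_atTop 1] with k hk
    have hk0 : (0 : ℝ) < (k : ℝ) := by exact_mod_cast hk
    have hnat : 2 * ((k / 2 : ℕ) : ℝ) ≤ (k : ℝ) := by
      exact_mod_cast (by omega : 2 * (k / 2) ≤ k)
    rw [div_le_iff₀ hk0]
    linarith

private lemma aux_half_atTop : Tendsto (fun k : ℕ => k / 2) atTop atTop := by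
  apply tendsto_atTop.2
  intro b
  filter_upwards [eventually_ge_atTop (2 * b)] with k hk
  omega

private lemma aux_split (a : ℕ → ℝ) (m k : ℕ) (h : 2 * m + 2 ≤ k) :
    ∑ l ∈ Finset.range (k + 1), a l * a (k - l)
      = (∑ j ∈ Finset.range (m + 1), a j * a (k - j))
        + (∑ l ∈ Finset.Ico (m + 1) (k - m), a l * a (k - l))
        + (∑ j ∈ Finset.range (m + 1), a j * a (k - j)) := by
  have e3 : (∑ l ∈ Finset.Ico (k - m) (k + 1), a l * a (k - l))
      = ∑ j ∈ Finset.range (m + 1), a j * a (k - j) := by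
    have := Finset.sum_Ico_reflect (fun l => a l * a (k - l)) 0
      (m := m + 1) (n := k) (by omega)
    have hidx : k + 1 - (m + 1) = k - m := by omega
    rw [hidx] at this
    simp only [Nat.sub_zero] at this
    rw [← this, Finset.range_eq_Ico]
    apply Finset.sum_congr rfl
    intro j hj
    simp only [Finset.mem_Ico] at hj
    have hjk : j ≤ k := by omega
    rw [Nat.sub_sub_self hjk, mul_comm]
  rw [Finset.range_eq_Ico,
    ← Finset.sum_Ico_consecutive (fun l => a l * a (k - l))
      (Nat.zero_le (m + 1)) (show m + 1 ≤ k + 1 by omega),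
    ← Finset.sum_Ico_consecutive (fun l => a l * a (k - l))
      (show m + 1 ≤ k - m by omega) (show k - m ≤ k + 1 by omega),
    e3, ← Finset.range_eq_Ico]
  ring

private lemma aux_reflect (a : ℕ → ℝ) (m k : ℕ) (h : 2 * m + 2 ≤ k) :
    ∑ l ∈ Finset.Ico (m + 1) (k - m), a (k - l)
      = ∑ l ∈ Finset.Ico (m + 1) (k - m), a l := by
  have := Finset.sum_Ico_reflect a (m + 1) (m := k - m) (n := k) (by omega)
  have h1 : k + 1 - (k - m) = m + 1 := by omega
  have h2 : k + 1 - (m + 1) = k - m := by omega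
  rw [h1, h2] at this
  exact this

private lemma aux_mid (a : ℕ → ℝ) (hpos : ∀ k, 0 < a k) (hanti : Antitone a)
    (C : ℝ) (hC : ∀ k, a (k / 2) ≤ C * a k) (m k : ℕ) (h : 2 * m + 2 ≤ k) :
    ∑ l ∈ Finset.Ico (m + 1) (k - m), a l * a (k - l)
      ≤ C * a k * (2 * ∑ l ∈ Finset.Ico (m + 1) (k - m), a l) := by
  have hterm : ∀ l ∈ Finset.Ico (m + 1) (k - m),
      a l * a (k - l) ≤ C * a k * (a l + a (k - l)) := by
    intro l hl
    simp only [Finset.mem_Ico] at hl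
    have hCk : 0 < C * a k := lt_of_lt_of_le (hpos (k / 2)) (hC k)
    rcases le_or_gt l (k / 2) with h1 | h1
    · have : k / 2 ≤ k - l := by omega
      have h2 : a (k - l) ≤ C * a k := le_trans (hanti this) (hC k)
      nlinarith [hpos l, hpos (k - l)]
    · have : k / 2 ≤ l := by omega
      have h2 : a l ≤ C * a k := le_trans (hanti this) (hC k)
      nlinarith [hpos l, hpos (k - l)]
  calc ∑ l ∈ Finset.Ico (m + 1) (k - m), a l * a (k - l)
      ≤ ∑ l ∈ Finset.Ico (m + 1) (k - m), C * a k * (a l + a (k - l)) :=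
        Finset.sum_le_sum hterm
    _ = C * a k * ((∑ l ∈ Finset.Ico (m + 1) (k - m), a l)
          + ∑ l ∈ Finset.Ico (m + 1) (k - m), a (k - l)) := by
        rw [← Finset.mul_sum, Finset.sum_add_distrib]
    _ = C * a k * (2 * ∑ l ∈ Finset.Ico (m + 1) (k - m), a l) := by
        rw [aux_reflect a m k h]; ring

end auxlemmas

/-- If `ᾱ` is a positive nonincreasing sequence with `ᾱ(k) ~ λ^γ k^{−γ}` (`λ > 0`,
`γ > 1`) and `ρ = Σ_l ᾱ(l) < ∞`, then `Σ_{l=0}^k ᾱ(l) ᾱ(k−l) / ᾱ(k) → 2ρ`. -/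
theorem stmt15 (a : ℕ → ℝ) (lam γ : ℝ) (hlam : 0 < lam) (hγ : 1 < γ)
    (hpos : ∀ k, 0 < a k) (hanti : Antitone a)
    (hasymp : Tendsto (fun k : ℕ => a k / (lam ^ γ * (k : ℝ) ^ (-γ))) atTop (nhds 1))
    (hsum : Summable a) :
    Tendsto (fun k => (∑ l ∈ Finset.range (k + 1), a l * a (k - l)) / a k)
      atTop (nhds (2 * ∑' l : ℕ, a l)) := by
  set ρ := ∑' l : ℕ, a l with hρdef
  -- a bound C with a (k/2) ≤ C * a k
  have hhalf : Tendsto (fun k => a (k / 2) / a k) atTop (𝓝 ((1/2 : ℝ) ^ (-γ))) :=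
    auxratio a lam γ hlam hpos hasymp (fun k => k / 2) (1/2) (by norm_num)
      aux_half_atTop aux_cast_half
  obtain ⟨C0, hC0⟩ := hhalf.bddAbove_range
  simp only [mem_upperBounds, Set.mem_range, forall_exists_index] at hC0
  set C : ℝ := max C0 1 with hCdef
  have hC1 : (1 : ℝ) ≤ C := le_max_right _ _
  have hC : ∀ k, a (k / 2) ≤ C * a k := by
    intro k
    have h1 : a (k / 2) / a k ≤ C0 := hC0 _ k rfl
    have := (div_le_iff₀ (hpos k)).1 (le_trans h1 (le_max_left C0 1))
    linarith
  have hCpos : (0 : ℝ) < C := lt_of_lt_of_le one_pos hC1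
  -- tail sums
  set t : ℕ → ℝ := fun n => ∑' i, a (i + n) with htdef
  have hsummt : ∀ n : ℕ, Summable fun i => a (i + n) :=
    fun n => (summable_nat_add_iff n).2 hsum
  have ht0 : ∀ n, 0 ≤ t n := fun n => tsum_nonneg fun i => (hpos _).le
  have htT : Tendsto t atTop (𝓝 0) := by
    have hps : Tendsto (fun n => ∑ i ∈ Finset.range n, a i) atTop (𝓝 ρ) :=
      hsum.hasSum.tendsto_sum_nat
    have : Tendsto (fun n => ρ - ∑ i ∈ Finset.range n, a i) atTop (𝓝 0) := by
      simpa using ((tendsto_const_nhds (x := ρ)).sub hps)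
    apply this.congr
    intro n
    have := Summable.sum_add_tsum_nat_add (f := a) n hsum
    simp only [htdef]
    linarith
  have hIco : ∀ m k : ℕ, ∑ l ∈ Finset.Ico (m + 1) (k - m), a l ≤ t (m + 1) := by
    intro m k
    rw [Finset.sum_Ico_eq_sum_range]
    have he : ∀ i : ℕ, a (m + 1 + i) = a (i + (m + 1)) := fun i => by rw [add_comm]
    calc ∑ i ∈ Finset.range (k - m - (m + 1)), a (m + 1 + i)
        = ∑ i ∈ Finset.range (k - m - (m + 1)), a (i + (m + 1)) := by
          exact Finset.sum_congr rfl fun i _ => he i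
      _ ≤ t (m + 1) := Summable.sum_le_tsum _ (fun i _ => (hpos _).le) (hsummt (m + 1))
  -- main ε-argument
  rw [Metric.tendsto_atTop]
  intro ε hε
  obtain ⟨m₁, hm₁⟩ := Metric.tendsto_atTop.1 htT (ε / (8 * C)) (by positivity)
  obtain ⟨m₂, hm₂⟩ := Metric.tendsto_atTop.1 hsum.hasSum.tendsto_sum_nat (ε / 8)
    (by positivity)
  set m := max m₁ m₂ with hmdef
  set P := ∑ j ∈ Finset.range (m + 1), a j with hPdef
  have hP : |P - ρ| < ε / 8 := by
    have := hm₂ (m + 1) (by omega)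
    rwa [Real.dist_eq] at this
  have htm : t (m + 1) ≤ ε / (8 * C) := by
    have := hm₁ (m + 1) (by omega)
    rw [Real.dist_eq, sub_zero, abs_of_nonneg (ht0 _)] at this
    linarith
  -- convergence of the boundary sums
  have hB : Tendsto (fun k => ∑ j ∈ Finset.range (m + 1), a j * (a (k - j) / a k))
      atTop (𝓝 P) := by
    have h1 : ∀ j ∈ Finset.range (m + 1),
        Tendsto (fun k => a j * (a (k - j) / a k)) atTop (𝓝 (a j)) := by
      intro j _
      have hr : Tendsto (fun k => a (k - j) / a k) atTop (𝓝 1) := by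
        have := auxratio a lam γ hlam hpos hasymp (fun k => k - j) 1 one_pos
          (tendsto_sub_atTop_nat j) (aux_cast_sub j)
        simpa [Real.one_rpow] using this
      simpa using (tendsto_const_nhds.mul hr)
    simpa using tendsto_finset_sum (Finset.range (m + 1)) h1
  obtain ⟨N₁, hN₁⟩ := Metric.tendsto_atTop.1 hB (ε / 8) (by positivity)
  refine ⟨max N₁ (2 * m + 2), fun k hk => ?_⟩
  have hk1 : N₁ ≤ k := le_trans (le_max_left _ _) hk
  have hk2 : 2 * m + 2 ≤ k := le_trans (le_max_right _ _) hk
  have hak : 0 < a k := hpos k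
  set B := ∑ j ∈ Finset.range (m + 1), a j * a (k - j) with hBdef
  set M := ∑ l ∈ Finset.Ico (m + 1) (k - m), a l * a (k - l) with hMdef
  have hS : ∑ l ∈ Finset.range (k + 1), a l * a (k - l) = B + M + B :=
    aux_split a m k hk2
  have hM0 : 0 ≤ M :=
    Finset.sum_nonneg fun l _ => mul_nonneg (hpos _).le (hpos _).le
  have hMle : M ≤ C * a k * (2 * t (m + 1)) := by
    refine le_trans (aux_mid a hpos hanti C hC m k hk2) ?_
    have h := hIco m k
    exact mul_le_mul_of_nonneg_left (by linarith) (by positivity)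
  have hBk : |B / a k - P| < ε / 8 := by
    have h1 := hN₁ k hk1
    rw [Real.dist_eq] at h1
    have h2 : B / a k = ∑ j ∈ Finset.range (m + 1), a j * (a (k - j) / a k) := by
      rw [hBdef, Finset.sum_div]
      exact Finset.sum_congr rfl fun j _ => by rw [mul_div_assoc]
    rw [h2]; exact h1
  rw [Real.dist_eq]
  have key : (∑ l ∈ Finset.range (k + 1), a l * a (k - l)) / a k - 2 * ρ
      = 2 * (B / a k - P) + 2 * (P - ρ) + M / a k := by
    rw [hS]; field_simp; ring
  rw [key]
  have hMak : M / a k ≤ 2 * C * t (m + 1) := by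
    rw [div_le_iff₀ hak]
    nlinarith
  have hMak2 : M / a k ≤ ε / 4 := by
    have : 2 * C * t (m + 1) ≤ 2 * C * (ε / (8 * C)) :=
      mul_le_mul_of_nonneg_left htm (by positivity)
    have h4 : 2 * C * (ε / (8 * C)) = ε / 4 := by field_simp; ring
    linarith
  have hMak0 : 0 ≤ M / a k := div_nonneg hM0 hak.le
  have habs1 : |2 * (B / a k - P) + 2 * (P - ρ) + M / a k|
      ≤ |2 * (B / a k - P)| + |2 * (P - ρ)| + |M / a k| :=
    le_trans (abs_add_le _ _) (by linarith [abs_add_le (2 * (B / a k - P)) (2 * (P - ρ))])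
  have e1 : |2 * (B / a k - P)| = 2 * |B / a k - P| := by
    rw [abs_mul, abs_of_pos (by norm_num : (0:ℝ) < 2)]
  have e2 : |2 * (P - ρ)| = 2 * |P - ρ| := by
    rw [abs_mul, abs_of_pos (by norm_num : (0:ℝ) < 2)]
  have e3 : |M / a k| = M / a k := abs_of_nonneg hMak0
  rw [e1, e2, e3] at habs1
  linarith
end

section
/- Let A be the transition kernel sum Σ_{k∈ℤ} A(k) of nonnegative M×M matrices, assumed irreducible and stochastic (Ae = e), with stationary probability vector π (πA = π, πe = 1) and finite first moments Σ_{k∈ℤ}|k| A(k) < ∞. Suppose the analytic factorization I − Â(z) = (I − R̂(z))(I − Φ(0))(I − Ĝ(z)) holds for z in a neighborhood of 1 within the common domain, where Ĝ(z) = Σ_{k≥1} z^{−k} G(k), R̂(z) = Σ_{k≥1} z^k R(k), G := Ĝ(1) is stochastic, R := R̂(1), and all matrices are differentiable at z = 1. Then σ := π (Σ_{k∈ℤ} k A(k)) e = −π (I − R)(I − Φ(0)) (Σ_{k=1}^{∞} k G(k)) e. -/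
open Filter Topology

private lemma matMulDeriv {M : ℕ} {B C : ℝ → Matrix (Fin M) (Fin M) ℝ}
    {B' C' : Matrix (Fin M) (Fin M) ℝ} {t : ℝ}
    (hB : ∀ i j, HasDerivAt (fun z => B z i j) (B' i j) t)
    (hC : ∀ i j, HasDerivAt (fun z => C z i j) (C' i j) t) :
    ∀ i j, HasDerivAt (fun z => (B z * C z) i j) ((B' * C t + B t * C') i j) t := by
  intro i j
  have : (fun z => (B z * C z) i j) = fun z => ∑ k, B z i k * C z k j := by
    funext z; simp [Matrix.mul_apply]
  rw [this]
  have : (B' * C t + B t * C') i j = ∑ k, (B' i k * C t k j + B t i k * C' k j) := by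
    simp [Matrix.mul_apply, Matrix.add_apply, Finset.sum_add_distrib]
  rw [this]
  exact HasDerivAt.fun_sum fun k _ => (hB i k).fun_mul (hC k j)
/-- Lemma 3.1 of the paper: differentiating the factorization
`I − Â(z) = (I − R̂(z))(I − Φ(0))(I − Ĝ(z))` at `z = 1` yields
`σ = π (Σ_k k A(k)) e = − π (I − R)(I − Φ(0)) (Σ_k k G(k)) e`. -/
theorem stmt19 (M : ℕ)
    (A : ℤ → Matrix (Fin M) (Fin M) ℝ) (hAnn : ∀ k i j, 0 ≤ A k i j)
    (hAmom : ∀ i j, Summable fun k : ℤ => |(k : ℝ)| * A k i j)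
    (G R : ℕ → Matrix (Fin M) (Fin M) ℝ)
    (hGnn : ∀ m i j, 0 ≤ G m i j) (hRnn : ∀ m i j, 0 ≤ R m i j)
    (Φ₀ : Matrix (Fin M) (Fin M) ℝ)
    (Ahat Ghat Rhat : ℝ → Matrix (Fin M) (Fin M) ℝ)
    (hAhat : ∀ z, Ahat z = Matrix.of fun i j => ∑' k : ℤ, z ^ k * A k i j)
    (hGhat : ∀ z, Ghat z = Matrix.of fun i j => ∑' m : ℕ, z⁻¹ ^ (m + 1) * G (m + 1) i j)
    (hRhat : ∀ z, Rhat z = Matrix.of fun i j => ∑' m : ℕ, z ^ (m + 1) * R (m + 1) i j)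
    (piv : Fin M → ℝ) (hpivnn : ∀ i, 0 ≤ piv i)
    (hpivA : Matrix.vecMul piv (Ahat 1) = piv) (hpiv1 : ∑ i, piv i = 1)
    (hAstoch : ∀ i, ∑ j, (Ahat 1) i j = 1)
    (hGstoch : ∀ i, ∑ j, (Ghat 1) i j = 1)
    (δ : ℝ) (hδ : 0 < δ)
    (hfact : ∀ z : ℝ, |z - 1| < δ →
      (1 : Matrix (Fin M) (Fin M) ℝ) - Ahat z = (1 - Rhat z) * (1 - Φ₀) * (1 - Ghat z))
    (A' R' : Matrix (Fin M) (Fin M) ℝ)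
    (hA' : ∀ i j, A' i j = ∑' k : ℤ, (k : ℝ) * A k i j)
    (hdA : ∀ i j, HasDerivAt (fun z => Ahat z i j) (A' i j) 1)
    (Gm : Matrix (Fin M) (Fin M) ℝ)
    (hGm : ∀ i j, Gm i j = ∑' m : ℕ, ((m : ℝ) + 1) * G (m + 1) i j)
    (hdG : ∀ i j, HasDerivAt (fun z => Ghat z i j) (-(Gm i j)) 1)
    (hdR : ∀ i j, HasDerivAt (fun z => Rhat z i j) (R' i j) 1) :
    dotProduct (Matrix.vecMul piv A') (fun _ => 1)
      = - dotProduct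
          (Matrix.vecMul piv ((1 - Rhat 1) * (1 - Φ₀) * Gm)) (fun _ => 1) := by

  -- derivative of z ↦ (1 - Rhat z) entries
  have h1R : ∀ i j, HasDerivAt (fun z => ((1 : Matrix (Fin M) (Fin M) ℝ) - Rhat z) i j)
      ((-R') i j) 1 := by
    intro i j
    have : (fun z => ((1 : Matrix (Fin M) (Fin M) ℝ) - Rhat z) i j)
        = fun z => (1 : Matrix (Fin M) (Fin M) ℝ) i j - Rhat z i j := by
      funext z; simp [Matrix.sub_apply]
    rw [this]
    simpa using (hasDerivAt_const (1:ℝ) ((1 : Matrix (Fin M) (Fin M) ℝ) i j)).fun_sub (hdR i j)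
  -- constant factor
  have h1Φ : ∀ i j, HasDerivAt (fun _ : ℝ => ((1 : Matrix (Fin M) (Fin M) ℝ) - Φ₀) i j)
      ((0 : Matrix (Fin M) (Fin M) ℝ) i j) 1 := by
    intro i j; simpa using hasDerivAt_const (1:ℝ) (((1 : Matrix (Fin M) (Fin M) ℝ) - Φ₀) i j)
  -- derivative of z ↦ (1 - Ghat z) entries
  have h1G : ∀ i j, HasDerivAt (fun z => ((1 : Matrix (Fin M) (Fin M) ℝ) - Ghat z) i j)
      (Gm i j) 1 := by
    intro i j
    have : (fun z => ((1 : Matrix (Fin M) (Fin M) ℝ) - Ghat z) i j)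
        = fun z => (1 : Matrix (Fin M) (Fin M) ℝ) i j - Ghat z i j := by
      funext z; simp [Matrix.sub_apply]
    rw [this]
    simpa using (hasDerivAt_const (1:ℝ) ((1 : Matrix (Fin M) (Fin M) ℝ) i j)).fun_sub (hdG i j)
  -- derivative of the first two factors
  have hB : ∀ i j, HasDerivAt (fun z => ((1 - Rhat z) * (1 - Φ₀)) i j)
      (((-R') * (1 - Φ₀)) i j) 1 := by
    intro i j
    have := matMulDeriv (B := fun z => 1 - Rhat z) (C := fun _ => 1 - Φ₀) h1R h1Φ i j
    simpa using this
  -- derivative of the triple product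
  have hD : ∀ i j, HasDerivAt (fun z => ((1 - Rhat z) * (1 - Φ₀) * (1 - Ghat z)) i j)
      (((-R') * (1 - Φ₀) * (1 - Ghat 1) + (1 - Rhat 1) * (1 - Φ₀) * Gm) i j) 1 := by
    intro i j
    exact matMulDeriv (B := fun z => (1 - Rhat z) * (1 - Φ₀)) (C := fun z => 1 - Ghat z)
      hB h1G i j
  -- derivative of the left-hand side
  have hL : ∀ i j, HasDerivAt (fun z => ((1 : Matrix (Fin M) (Fin M) ℝ) - Ahat z) i j)
      (-(A' i j)) 1 := by
    intro i j
    have : (fun z => ((1 : Matrix (Fin M) (Fin M) ℝ) - Ahat z) i j)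
        = fun z => (1 : Matrix (Fin M) (Fin M) ℝ) i j - Ahat z i j := by
      funext z; simp [Matrix.sub_apply]
    rw [this]
    simpa using (hasDerivAt_const (1:ℝ) ((1 : Matrix (Fin M) (Fin M) ℝ) i j)).fun_sub (hdA i j)
  -- the two sides agree near 1
  have hev : ∀ i j, (fun z => ((1 : Matrix (Fin M) (Fin M) ℝ) - Ahat z) i j)
      =ᶠ[nhds (1:ℝ)] (fun z => ((1 - Rhat z) * (1 - Φ₀) * (1 - Ghat z)) i j) := by
    intro i j
    filter_upwards [Metric.ball_mem_nhds (1:ℝ) hδ] with z hz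
    rw [hfact z (by simpa [Real.dist_eq] using hz)]
  -- uniqueness of derivative gives the matrix identity entrywise
  have hkey : ∀ i j, -(A' i j)
      = ((-R') * (1 - Φ₀) * (1 - Ghat 1) + (1 - Rhat 1) * (1 - Φ₀) * Gm) i j := by
    intro i j
    exact (hL i j).unique ((hD i j).congr_of_eventuallyEq (hev i j))
  have hAeq : A' = R' * (1 - Φ₀) * (1 - Ghat 1) - (1 - Rhat 1) * (1 - Φ₀) * Gm := by
    ext i j
    have h := hkey i j
    have h2 : ((-R') * (1 - Φ₀) * (1 - Ghat 1) : Matrix (Fin M) (Fin M) ℝ)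
        = -(R' * (1 - Φ₀) * (1 - Ghat 1)) := by simp [neg_mul]
    rw [h2] at h
    simp only [Matrix.add_apply, Matrix.neg_apply, Matrix.sub_apply] at h ⊢
    linarith
  -- (1 - G) e = 0
  have hGe : Matrix.mulVec (1 - Ghat 1) (fun _ => (1:ℝ)) = 0 := by
    funext i
    simp [Matrix.mulVec, dotProduct, Matrix.sub_apply, Finset.sum_sub_distrib,
      hGstoch i, Matrix.one_apply]
  have hzero : dotProduct (Matrix.vecMul piv (R' * (1 - Φ₀) * (1 - Ghat 1)))
      (fun _ => (1:ℝ)) = 0 := by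
    rw [← Matrix.dotProduct_mulVec, ← Matrix.mulVec_mulVec, hGe, Matrix.mulVec_zero,
      dotProduct_zero]
  rw [hAeq, Matrix.vecMul_sub, sub_dotProduct, hzero, zero_sub]
end
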